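/- arXiv:2304.00526 — 5 statements merged into one kernel-verified Lean document; each statement's English description precedes it below -/
import Mathlib

section
/- Let α > 0, β > 0, γ > 0 and λ ≥ 0. Then for every real s > 0 with s^α > λ, the Laplace transform of the Prabhakar kernel satisfies ∫_0^∞ e^{−s x} x^{β−1} E^γ_{α,β}(−λ x^α) dx = s^{αγ−β} / (λ + s^α)^γ. -/
open MeasureTheory Real Filter Topology

/-- Riemann–Liouville fractional integral of order `ν > 0`. -/
noncomputable def RL (ν : ℝ) (f : ℝ → ℝ) (x : ℝ) : ℝ :=
  (1 / Real.Gamma ν) * ∫ u in (0:ℝ)..x, (x - u) ^ (ν - 1) * f u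

/-- Conditional stable density at scale `t`: `f_α(x|t) = t^{-1/α} f_α(x t^{-1/α})`. -/
noncomputable def condStable (α : ℝ) (f : ℝ → ℝ) (t : ℝ) (x : ℝ) : ℝ :=
  t ^ (-(1/α)) * f (x * t ^ (-(1/α)))

/-- Three-parameter Mittag-Leffler (Prabhakar) function `E^γ_{α,β}(z)`. -/
noncomputable def prabhakar (α β γ : ℝ) (z : ℝ) : ℝ :=
  (1 / Real.Gamma γ) *
    ∑' k : ℕ, Real.Gamma (γ + k) * z ^ k / ((k.factorial : ℝ) * Real.Gamma (α * k + β))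

/-- One-parameter Mittag-Leffler function `E_α(z)`. -/
noncomputable def mittagLeffler (α : ℝ) (z : ℝ) : ℝ :=
  ∑' k : ℕ, z ^ k / Real.Gamma (α * k + 1)

lemma aux_integrableOn {a r : ℝ} (ha : 0 < a) (hr : 0 < r) :
    MeasureTheory.IntegrableOn (fun t : ℝ => t ^ (a - 1) * Real.exp (-(r * t)))
      (Set.Ioi 0) := by
  have h := integrableOn_rpow_mul_exp_neg_mul_rpow (p := 1) (s := a - 1) (b := r)
    (by linarith) one_pos hr
  refine h.congr_fun (fun t ht => ?_) measurableSet_Ioi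
  simp only [Real.rpow_one, neg_mul]

lemma aux_summable {γ : ℝ} (hγ : 0 < γ) {r : ℝ} (hr : |r| < 1) :
    Summable (fun k : ℕ => Real.Gamma (γ + k) * r ^ k / (k.factorial : ℝ)) := by
  rcases eq_or_ne r 0 with rfl | hr0
  · apply summable_of_ne_finset_zero (s := {0})
    intro k hk
    have hk0 : k ≠ 0 := by simpa using hk
    simp [zero_pow hk0]
  · have hpos : ∀ k : ℕ, 0 < Real.Gamma (γ + k) := fun k =>
      Real.Gamma_pos_of_pos (by positivity)
    apply summable_of_ratio_test_tendsto_lt_one hr (Eventually.of_forall ?_) ?_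
    · intro k
      exact div_ne_zero (mul_ne_zero (hpos k).ne' (pow_ne_zero _ hr0))
        (Nat.cast_ne_zero.mpr k.factorial_ne_zero)
    · have heq : ∀ k : ℕ,
          ‖Real.Gamma (γ + ((k+1 : ℕ) : ℝ)) * r ^ (k+1) / ((k+1).factorial : ℝ)‖ /
            ‖Real.Gamma (γ + k) * r ^ k / (k.factorial : ℝ)‖
          = |r| * (1 + (γ - 1) * (1 / (k + 1 : ℝ))) := by
        intro k
        have h1 : Real.Gamma (γ + (k+1)) = (γ + k) * Real.Gamma (γ + k) := by
          have h0 : γ + ((k : ℝ) + 1) = (γ + k) + 1 := by ring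
          push_cast
          rw [h0, Real.Gamma_add_one (by positivity)]
        have hfac : ((k+1).factorial : ℝ) = (k+1) * (k.factorial : ℝ) := by
          rw [Nat.factorial_succ]; push_cast; ring
        push_cast
        rw [h1, hfac]
        simp only [Real.norm_eq_abs, abs_div, abs_mul, abs_pow, pow_succ]
        rw [abs_of_pos (hpos k), abs_of_pos (show (0:ℝ) < γ + k by positivity),
          abs_of_pos (show (0:ℝ) < ((k:ℝ)+1) by positivity),
          abs_of_pos (show (0:ℝ) < (k.factorial : ℝ) by positivity)]
        have hg := (hpos k).ne'
        have hrk : |r| ^ k ≠ 0 := pow_ne_zero _ (abs_ne_zero.mpr hr0)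
        have hf : (k.factorial : ℝ) ≠ 0 := by positivity
        have hk1 : ((k:ℝ)+1) ≠ 0 := by positivity
        field_simp
        ring
      rw [show 𝓝 |r| = 𝓝 (|r| * (1 + (γ - 1) * 0)) by norm_num]
      refine Tendsto.congr (fun k => (heq k).symm) ?_
      exact tendsto_const_nhds.mul (tendsto_const_nhds.add
        (tendsto_const_nhds.mul tendsto_one_div_add_atTop_nhds_zero_nat))

lemma aux_binom {γ : ℝ} (hγ : 0 < γ) {x : ℝ} (hx : |x| < 1) :
    ∑' k : ℕ, Real.Gamma (γ + k) * x ^ k / (k.factorial : ℝ)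
      = Real.Gamma γ * (1 - x) ^ (-γ) := by
  obtain ⟨hx1, hx2⟩ := abs_lt.mp hx
  have h1x : (0:ℝ) < 1 - x := by linarith
  set F : ℕ → ℝ → ℝ := fun k t =>
    (x ^ k / (k.factorial : ℝ)) * (Real.exp (-t) * t ^ (γ + k - 1)) with hF
  have hint : ∀ k : ℕ, MeasureTheory.IntegrableOn (F k) (Set.Ioi 0) := fun k =>
    (Real.GammaIntegral_convergent (by positivity : (0:ℝ) < γ + k)).const_mul _
  have hval : ∀ k : ℕ, (∫ t in Set.Ioi (0:ℝ), F k t)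
      = (x ^ k / (k.factorial : ℝ)) * Real.Gamma (γ + k) := by
    intro k
    rw [hF]
    simp only
    rw [MeasureTheory.integral_const_mul, ← Real.Gamma_eq_integral (by positivity : (0:ℝ) < γ + k)]
  have hnorm : ∀ k : ℕ, (∫ t in Set.Ioi (0:ℝ), ‖F k t‖)
      = (|x| ^ k / (k.factorial : ℝ)) * Real.Gamma (γ + k) := by
    intro k
    have heq : ∀ t ∈ Set.Ioi (0:ℝ), ‖F k t‖
        = (|x| ^ k / (k.factorial : ℝ)) * (Real.exp (-t) * t ^ (γ + k - 1)) := by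
      intro t ht
      have ht' : (0:ℝ) < t := ht
      rw [hF]
      simp only [Real.norm_eq_abs, abs_mul, abs_div, abs_pow]
      rw [abs_of_nonneg (Real.exp_pos _).le,
        abs_of_nonneg (Real.rpow_nonneg ht'.le _),
        abs_of_nonneg (show (0:ℝ) ≤ (k.factorial : ℝ) by positivity)]
    rw [MeasureTheory.setIntegral_congr_fun measurableSet_Ioi heq,
      MeasureTheory.integral_const_mul,
      ← Real.Gamma_eq_integral (by positivity : (0:ℝ) < γ + k)]
  have hsum : Summable (fun k : ℕ => ∫ t in Set.Ioi (0:ℝ), ‖F k t‖) := by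
    refine Summable.congr ?_ (fun k => (hnorm k).symm)
    refine ((aux_summable hγ (r := |x|) (by rwa [abs_abs])).congr ?_)
    intro k; ring
  have hswap := MeasureTheory.integral_tsum_of_summable_integral_norm hint hsum
  have htsum : ∀ t ∈ Set.Ioi (0:ℝ), (∑' k : ℕ, F k t)
      = t ^ (γ - 1) * Real.exp (-((1-x) * t)) := by
    intro t ht
    have ht' : (0:ℝ) < t := ht
    have hterm : ∀ k : ℕ, F k t
        = (Real.exp (-t) * t ^ (γ - 1)) * ((x*t) ^ k / (k.factorial : ℝ)) := by
      intro k
      have hpow : t ^ (γ + (k:ℕ) - 1) = t ^ (γ - 1) * t ^ (k:ℕ) := by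
        rw [← Real.rpow_natCast t k, ← Real.rpow_add ht']
        ring_nf
      rw [hF]
      simp only
      rw [hpow, mul_pow]
      ring
    rw [tsum_congr hterm, tsum_mul_left]
    have hexp : (∑' k : ℕ, (x*t) ^ k / (k.factorial : ℝ)) = Real.exp (x*t) := by
      rw [Real.exp_eq_exp_ℝ, NormedSpace.exp_eq_tsum_div]
    rw [hexp, show -((1-x)*t) = -t + x*t by ring, Real.exp_add]
    ring
  have hI : (∫ t in Set.Ioi (0:ℝ), (∑' k : ℕ, F k t)) = (1/(1-x)) ^ γ * Real.Gamma γ := by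
    rw [MeasureTheory.setIntegral_congr_fun measurableSet_Ioi htsum]
    exact integral_rpow_mul_exp_neg_mul_Ioi hγ h1x
  have : (∑' k : ℕ, Real.Gamma (γ + k) * x ^ k / (k.factorial : ℝ))
      = ∑' k : ℕ, ∫ t in Set.Ioi (0:ℝ), F k t := by
    refine tsum_congr fun k => ?_
    rw [hval k]; ring
  rw [this, hswap, hI, one_div, Real.inv_rpow h1x.le, ← Real.rpow_neg h1x.le, mul_comm]

theorem stmt_4 (α β γ : ℝ) (hα : 0 < α) (hβ : 0 < β) (hγ : 0 < γ)
    (lam : ℝ) (hlam : 0 ≤ lam) :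
    ∀ s > (0:ℝ), lam < s ^ α →
      (∫ x in Set.Ioi (0:ℝ),
          Real.exp (-(s * x)) * (x ^ (β - 1) * prabhakar α β γ (-(lam * x ^ α))))
        = s ^ (α * γ - β) / (lam + s ^ α) ^ γ := by
  intro s hs hls
  have hsa : (0:ℝ) < s ^ α := Real.rpow_pos_of_pos hs α
  have hΓγ : (0:ℝ) < Real.Gamma γ := Real.Gamma_pos_of_pos hγ
  have hβk : ∀ k : ℕ, (0:ℝ) < α * k + β := fun k => by positivity
  have hΓk : ∀ k : ℕ, (0:ℝ) < Real.Gamma (α * k + β) := fun k => Real.Gamma_pos_of_pos (hβk k)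
  have hΓγk : ∀ k : ℕ, (0:ℝ) < Real.Gamma (γ + k) := fun k =>
    Real.Gamma_pos_of_pos (by positivity)
  set r : ℝ := lam / s ^ α with hr_def
  have hr0 : 0 ≤ r := div_nonneg hlam hsa.le
  have hr : |r| < 1 := by
    rw [abs_of_nonneg hr0, hr_def, div_lt_one hsa]; exact hls
  set F : ℕ → ℝ → ℝ := fun k t =>
    (Real.Gamma (γ + k) * (-lam) ^ k /
        ((k.factorial : ℝ) * Real.Gamma (α * k + β) * Real.Gamma γ))
      * (t ^ (α * k + β - 1) * Real.exp (-(s * t))) with hF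
  -- pointwise expansion of the integrand
  have hpt : ∀ t ∈ Set.Ioi (0:ℝ),
      Real.exp (-(s * t)) * (t ^ (β - 1) * prabhakar α β γ (-(lam * t ^ α)))
        = ∑' k : ℕ, F k t := by
    intro t ht
    have ht' : (0:ℝ) < t := ht
    rw [prabhakar]
    have hpull : Real.exp (-(s*t)) * (t^(β-1) * ((1/Real.Gamma γ) *
          ∑' k : ℕ, Real.Gamma (γ + k) * (-(lam * t ^ α)) ^ k /
            ((k.factorial : ℝ) * Real.Gamma (α * k + β))))
        = ∑' k : ℕ, (Real.exp (-(s*t)) * t^(β-1) * (1/Real.Gamma γ)) *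
            (Real.Gamma (γ + k) * (-(lam * t ^ α)) ^ k /
              ((k.factorial : ℝ) * Real.Gamma (α * k + β))) := by
      rw [tsum_mul_left]; ring
    rw [hpull]
    refine tsum_congr fun k => ?_
    have hzk : (-(lam * t ^ α)) ^ k = (-lam) ^ k * t ^ (α * (k:ℕ)) := by
      rw [show -(lam * t^α) = (-lam) * t^α by ring, mul_pow,
        ← Real.rpow_natCast (t ^ α) k, ← Real.rpow_mul ht'.le]
    have hpw : t ^ (α * (k:ℕ) + β - 1) = t ^ (β - 1) * t ^ (α * (k:ℕ)) := by
      rw [← Real.rpow_add ht']; ring_nf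
    rw [hF]
    simp only
    rw [hzk, hpw]
    have h1 := (hΓk k).ne'
    have h2 := hΓγ.ne'
    have h3 : ((k.factorial : ℝ)) ≠ 0 := by positivity
    field_simp
  rw [MeasureTheory.setIntegral_congr_fun measurableSet_Ioi hpt]
  have hint : ∀ k : ℕ, MeasureTheory.IntegrableOn (F k) (Set.Ioi 0) := fun k =>
    (aux_integrableOn (hβk k) hs).const_mul _
  -- powers of 1/s
  have hone : ∀ k : ℕ, ((1/s):ℝ) ^ (α * (k:ℕ) + β) = ((s^α)⁻¹) ^ k * (1/s) ^ β := by
    intro k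
    rw [Real.rpow_add (by positivity : (0:ℝ) < 1/s)]
    congr 1
    rw [Real.rpow_mul (by positivity : (0:ℝ) ≤ 1/s), Real.rpow_natCast, one_div,
      Real.inv_rpow hs.le]
  -- value of each integral
  have hval : ∀ k : ℕ, (∫ t in Set.Ioi (0:ℝ), F k t)
      = ((1/s) ^ β / Real.Gamma γ) *
          (Real.Gamma (γ + k) * (-r) ^ k / (k.factorial : ℝ)) := by
    intro k
    rw [hF]
    simp only
    rw [MeasureTheory.integral_const_mul, integral_rpow_mul_exp_neg_mul_Ioi (hβk k) hs, hone k]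
    have h1 := (hΓk k).ne'
    have h2 := hΓγ.ne'
    have h3 : ((k.factorial : ℝ)) ≠ 0 := by positivity
    have h4 : (-r) ^ k = (-lam) ^ k * ((s^α)⁻¹) ^ k := by
      rw [← mul_pow]
      congr 1
      rw [hr_def]
      field_simp
    rw [h4]
    field_simp
  -- norms of each integral
  have hnorm : ∀ k : ℕ, (∫ t in Set.Ioi (0:ℝ), ‖F k t‖)
      = ((1/s) ^ β / Real.Gamma γ) *
          (Real.Gamma (γ + k) * r ^ k / (k.factorial : ℝ)) := by
    intro k
    have heq : ∀ t ∈ Set.Ioi (0:ℝ), ‖F k t‖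
        = (Real.Gamma (γ + k) * lam ^ k /
            ((k.factorial : ℝ) * Real.Gamma (α * k + β) * Real.Gamma γ))
          * (t ^ (α * k + β - 1) * Real.exp (-(s * t))) := by
      intro t ht
      have ht' : (0:ℝ) < t := ht
      rw [hF]
      simp only [Real.norm_eq_abs, abs_mul, abs_div, abs_pow, abs_neg]
      rw [abs_of_nonneg hlam, abs_of_pos (hΓγk k), abs_of_pos (hΓk k), abs_of_pos hΓγ,
        abs_of_nonneg (show (0:ℝ) ≤ (k.factorial : ℝ) by positivity),
        abs_of_nonneg (Real.rpow_nonneg ht'.le _),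
        abs_of_nonneg (Real.exp_pos _).le]
    rw [MeasureTheory.setIntegral_congr_fun measurableSet_Ioi heq,
      MeasureTheory.integral_const_mul, integral_rpow_mul_exp_neg_mul_Ioi (hβk k) hs, hone k]
    have h1 := (hΓk k).ne'
    have h2 := hΓγ.ne'
    have h3 : ((k.factorial : ℝ)) ≠ 0 := by positivity
    have h4 : r ^ k = lam ^ k * ((s^α)⁻¹) ^ k := by
      rw [← mul_pow]
      congr 1
    rw [h4]
    field_simp
  have hsum : Summable (fun k : ℕ => ∫ t in Set.Ioi (0:ℝ), ‖F k t‖) := by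
    refine Summable.congr ?_ (fun k => (hnorm k).symm)
    exact ((aux_summable hγ hr).mul_left _)
  rw [← MeasureTheory.integral_tsum_of_summable_integral_norm hint hsum]
  rw [tsum_congr hval, tsum_mul_left, aux_binom hγ (x := -r) (by rwa [abs_neg])]
  -- final algebra
  have h1r : 1 - (-r) = (lam + s ^ α) / s ^ α := by
    rw [hr_def]; field_simp; ring
  have hls' : (0:ℝ) < lam + s ^ α := by positivity
  rw [h1r, Real.rpow_neg (by positivity), Real.div_rpow hls'.le hsa.le, inv_div,
    ← Real.rpow_mul hs.le, show α * γ - β = α * γ + (-β) by ring,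
    Real.rpow_add hs, Real.rpow_neg hs.le, one_div, Real.inv_rpow hs.le]
  field_simp
end

section
/- Let 0 < α < 1, let f_α be the one-sided stable density and f_α(x|t) = t^{-1/α} f_α(x t^{-1/α}) its conditional version at scale t > 0. Let γ > 0, β > αγ, θ > −αγ and λ ≥ 0, and define the mixture M(x) = (1/Γ(γ + θ/α)) ∫_0^∞ (I₊^{β−αγ} f_α(·|t))(x) t^{γ+θ/α−1} e^{−λ t} dt for x ≥ 0. Then for every s > 0, ∫_0^∞ e^{−s x} M(x) dx = s^{αγ−β} / (λ + s^α)^{γ+θ/α}. -/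
open MeasureTheory Real Set
open scoped ENNReal

lemma lint_shift (F : ℝ → ℝ≥0∞) (hF : Measurable F) (u : ℝ) :
    ∫⁻ x, F x = ∫⁻ y, F (y + u) := by
  conv_lhs => rw [← map_add_right_eq_self volume u]
  exact lintegral_map hF (measurable_add_const u)

lemma lint_Ioi_shift {g : ℝ → ℝ≥0∞} (hg : Measurable g) (u : ℝ) :
    ∫⁻ x in Ioi u, g x = ∫⁻ y in Ioi 0, g (y + u) := by
  rw [← lintegral_indicator measurableSet_Ioi, ← lintegral_indicator measurableSet_Ioi,
    lint_shift _ (hg.indicator measurableSet_Ioi) u]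
  congr 1; ext y
  by_cases hy : 0 < y
  · rw [Set.indicator_of_mem (by simpa using hy), Set.indicator_of_mem (by simpa using hy)]
  · rw [Set.indicator_of_notMem (by simpa using hy), Set.indicator_of_notMem (by simpa using hy)]

/-- Laplace transform of the shifted power kernel. -/
lemma lint_kernel {s ν : ℝ} (u : ℝ) (hs : 0 < s) (hν : 0 < ν) :
    ∫⁻ x in Ioi u, ENNReal.ofReal (Real.exp (-(s*x)) * (x-u) ^ (ν-1)) =
      ENNReal.ofReal (Real.exp (-(s*u)) * ((1/s) ^ ν * Real.Gamma ν)) := by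
  have hmeas : Measurable fun x : ℝ => ENNReal.ofReal (Real.exp (-(s*x)) * (x-u) ^ (ν-1)) := by
    fun_prop
  rw [lint_Ioi_shift hmeas u]
  have h1 : ∀ y : ℝ, Real.exp (-(s*(y+u))) * (y + u - u) ^ (ν-1)
      = Real.exp (-(s*u)) * (y ^ (ν-1) * Real.exp (-(s*y))) := by
    intro y
    rw [add_sub_cancel_right, show -(s*(y+u)) = -(s*u) + -(s*y) by ring, Real.exp_add]
    ring
  simp only [h1]
  have hint : IntegrableOn (fun y : ℝ => Real.exp (-(s*u)) * (y ^ (ν-1) * Real.exp (-(s*y)))) (Ioi 0) := by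
    apply Integrable.const_mul
    apply (integrableOn_rpow_mul_exp_neg_mul_rpow (by linarith : (-1:ℝ) < ν - 1) zero_lt_one hs).congr_fun
      _ measurableSet_Ioi
    intro x hx
    simp only [Real.rpow_one]; ring_nf
  have hnn : 0 ≤ᵐ[volume.restrict (Ioi (0:ℝ))]
      fun y : ℝ => Real.exp (-(s*u)) * (y ^ (ν-1) * Real.exp (-(s*y))) := by
    filter_upwards [self_mem_ae_restrict measurableSet_Ioi] with y hy
    have : (0:ℝ) < y := hy
    positivity
  rw [← ofReal_integral_eq_lintegral_ofReal hint hnn]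
  rw [MeasureTheory.integral_const_mul, integral_rpow_mul_exp_neg_mul_Ioi hν hs]
lemma lap_cond {α : ℝ} (hα0 : 0 < α) {f : ℝ → ℝ}
    (hlap : ∀ s > (0:ℝ), (∫ x in Set.Ioi (0:ℝ), Real.exp (-(s * x)) * f x) = Real.exp (-(s ^ α)))
    {t s : ℝ} (ht : 0 < t) (hs : 0 < s) :
    ∫ x in Ioi (0:ℝ), Real.exp (-(s*x)) * condStable α f t x = Real.exp (-(t * s ^ α)) := by
  have hc : (0:ℝ) < t ^ (-(1/α)) := Real.rpow_pos_of_pos ht _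
  set c : ℝ := t ^ (-(1/α)) with hcdef
  have hcinv : c⁻¹ = t ^ (1/α) := by
    rw [hcdef, Real.rpow_neg ht.le, inv_inv]
  have hs' : 0 < s * c⁻¹ := by positivity
  have key : ∀ x : ℝ, Real.exp (-(s*x)) * condStable α f t x
      = (fun y => Real.exp (-(s * c⁻¹ * y)) * (c * f y)) (x * c) := by
    intro x
    simp only [condStable, ← hcdef]
    rw [show s * c⁻¹ * (x * c) = s * x by field_simp]
  simp only [key]
  rw [MeasureTheory.integral_comp_mul_right_Ioi (fun y => Real.exp (-(s * c⁻¹ * y)) * (c * f y)) 0 hc]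
  simp only [zero_mul, smul_eq_mul]
  have : ∀ y : ℝ, Real.exp (-(s * c⁻¹ * y)) * (c * f y) = c * (Real.exp (-(s * c⁻¹ * y)) * f y) := by
    intro y; ring
  simp only [this]
  rw [MeasureTheory.integral_const_mul, hlap _ hs']
  have hexp : (s * c⁻¹) ^ α = t * s ^ α := by
    rw [hcinv, Real.mul_rpow hs.le (Real.rpow_nonneg ht.le _), ← Real.rpow_mul ht.le,
      one_div_mul_cancel hα0.ne', Real.rpow_one, mul_comm]
  rw [hexp]
  field_simp

lemma lap_cond_integrable {α : ℝ} {f : ℝ → ℝ} (hmeas : Measurable f) (hnn : ∀ x, 0 ≤ f x)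
    (hint : Integrable f) {t s : ℝ} (ht : 0 < t) (hs : 0 < s) :
    IntegrableOn (fun x => Real.exp (-(s*x)) * condStable α f t x) (Ioi (0:ℝ)) := by
  have hc : (0:ℝ) < t ^ (-(1/α)) := Real.rpow_pos_of_pos ht _
  have h1 : Integrable (fun x : ℝ => t ^ (-(1/α)) * f (x * t ^ (-(1/α)))) :=
    (hint.comp_mul_right' hc.ne').const_mul _
  apply Integrable.mono' h1.integrableOn
  · apply Measurable.aestronglyMeasurable
    unfold condStable; fun_prop
  · filter_upwards [self_mem_ae_restrict measurableSet_Ioi] with x hx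
    have hx0 : (0:ℝ) < x := hx
    have hfnn : 0 ≤ t ^ (-(1/α)) * f (x * t ^ (-(1/α))) := mul_nonneg hc.le (hnn _)
    simp only [condStable]
    rw [Real.norm_eq_abs, abs_of_nonneg (mul_nonneg (Real.exp_nonneg _) hfnn)]
    nth_rewrite 2 [show t ^ (-(1/α)) * f (x * t ^ (-(1/α)))
      = 1 * (t ^ (-(1/α)) * f (x * t ^ (-(1/α)))) by ring]
    apply mul_le_mul_of_nonneg_right _ hfnn
    exact Real.exp_le_one_iff.mpr (by nlinarith)

lemma lap_cond_lint {α : ℝ} (hα0 : 0 < α) {f : ℝ → ℝ} (hmeas : Measurable f) (hnn : ∀ x, 0 ≤ f x)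
    (hint : Integrable f)
    (hlap : ∀ s > (0:ℝ), (∫ x in Set.Ioi (0:ℝ), Real.exp (-(s * x)) * f x) = Real.exp (-(s ^ α)))
    {t s : ℝ} (ht : 0 < t) (hs : 0 < s) :
    ∫⁻ x in Ioi (0:ℝ), ENNReal.ofReal (Real.exp (-(s*x)) * condStable α f t x)
      = ENNReal.ofReal (Real.exp (-(t * s ^ α))) := by
  rw [← ofReal_integral_eq_lintegral_ofReal (lap_cond_integrable hmeas hnn hint ht hs) ?_,
    lap_cond hα0 hlap ht hs]
  · filter_upwards [self_mem_ae_restrict measurableSet_Ioi] with x hx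
    have hc : (0:ℝ) < t ^ (-(1/α)) := Real.rpow_pos_of_pos ht _
    exact mul_nonneg (Real.exp_nonneg _) (mul_nonneg hc.le (hnn _))

noncomputable def Kbig (α ν : ℝ) (f : ℝ → ℝ) (q : (ℝ × ℝ) × ℝ) : ℝ≥0∞ :=
  Set.indicator {q : (ℝ × ℝ) × ℝ | q.2 ∈ Ioc 0 q.1.2}
    (fun q => ENNReal.ofReal ((q.1.2 - q.2) ^ (ν - 1) * condStable α f q.1.1 q.2)) q

lemma Kbig_meas {α ν : ℝ} {f : ℝ → ℝ} (hf : Measurable f) : Measurable (Kbig α ν f) := by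
  unfold Kbig
  apply Measurable.indicator
  · unfold condStable; fun_prop
  · exact (measurableSet_lt measurable_const measurable_snd).inter
      (measurableSet_le measurable_snd (measurable_fst.snd))

noncomputable def Jbig (α ν : ℝ) (f : ℝ → ℝ) (p : ℝ × ℝ) : ℝ≥0∞ := ∫⁻ u, Kbig α ν f (p, u)

lemma Jbig_meas {α ν : ℝ} {f : ℝ → ℝ} (hf : Measurable f) : Measurable (Jbig α ν f) :=
  (Kbig_meas hf).lintegral_prod_right'

lemma Jbig_eq {α ν : ℝ} {f : ℝ → ℝ} (p : ℝ × ℝ) :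
    Jbig α ν f p = ∫⁻ u in Ioc 0 p.2,
      ENNReal.ofReal ((p.2 - u) ^ (ν - 1) * condStable α f p.1 u) := by
  rw [Jbig, ← lintegral_indicator measurableSet_Ioc]
  refine lintegral_congr fun u => ?_
  by_cases hu : u ∈ Ioc (0:ℝ) p.2
  · rw [Set.indicator_of_mem hu, Kbig, Set.indicator_of_mem (show (p,u) ∈ {q : (ℝ×ℝ)×ℝ | q.2 ∈ Ioc 0 q.1.2} from hu)]
  · rw [Set.indicator_of_notMem hu, Kbig, Set.indicator_of_notMem (show (p,u) ∉ {q : (ℝ×ℝ)×ℝ | q.2 ∈ Ioc 0 q.1.2} from hu)]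

lemma RL_eq {α ν : ℝ} {f : ℝ → ℝ} (hf : Measurable f) (hnn : ∀ y, 0 ≤ f y)
    {t x : ℝ} (ht : 0 < t) (hx : 0 < x) :
    RL ν (condStable α f t) x = (1 / Real.Gamma ν) * (Jbig α ν f (t, x)).toReal := by
  rw [RL, intervalIntegral.integral_of_le hx.le, Jbig_eq]
  congr 1
  rw [integral_eq_lintegral_of_nonneg_ae]
  · filter_upwards [self_mem_ae_restrict measurableSet_Ioc] with u hu
    exact mul_nonneg (Real.rpow_nonneg (sub_nonneg.mpr hu.2) _)
      (mul_nonneg (Real.rpow_pos_of_pos ht _).le (hnn _))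
  · apply Measurable.aestronglyMeasurable
    unfold condStable; fun_prop

lemma lapRL {α : ℝ} (hα0 : 0 < α) {f : ℝ → ℝ} (hmeas : Measurable f) (hnn : ∀ x, 0 ≤ f x)
    (hint : Integrable f)
    (hlap : ∀ s > (0:ℝ), (∫ x in Set.Ioi (0:ℝ), Real.exp (-(s * x)) * f x) = Real.exp (-(s ^ α)))
    {ν t s : ℝ} (hν : 0 < ν) (ht : 0 < t) (hs : 0 < s) :
    ∫⁻ x in Ioi (0:ℝ), ENNReal.ofReal (Real.exp (-(s*x)) * RL ν (condStable α f t) x)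
      = ENNReal.ofReal ((1/s) ^ ν * Real.exp (-(t * s ^ α))) := by
  have hΓ : 0 < Real.Gamma ν := Real.Gamma_pos_of_pos hν
  have hcs_nn : ∀ u, 0 ≤ condStable α f t u := fun u =>
    mul_nonneg (Real.rpow_pos_of_pos ht _).le (hnn _)
  have hK : Measurable fun p : ℝ × ℝ => Kbig α ν f ((t, p.1), p.2) :=
    (Kbig_meas hmeas).comp (by fun_prop)
  have key : ∫⁻ x in Ioi (0:ℝ), ENNReal.ofReal (Real.exp (-(s*x))) * Jbig α ν f (t, x)
      = ENNReal.ofReal (Real.exp (-(t * s ^ α))) * ENNReal.ofReal ((1/s) ^ ν * Real.Gamma ν) := by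
    have e1 : ∀ x : ℝ, ENNReal.ofReal (Real.exp (-(s*x))) * Jbig α ν f (t, x)
        = ∫⁻ u, ENNReal.ofReal (Real.exp (-(s*x))) * Kbig α ν f ((t, x), u) := by
      intro x
      rw [Jbig]
      exact (lintegral_const_mul _ ((Kbig_meas hmeas).comp measurable_prodMk_left)).symm
    simp only [e1]
    rw [lintegral_lintegral_swap
      (((by fun_prop : Measurable fun p : ℝ × ℝ => ENNReal.ofReal (Real.exp (-(s*p.1)))).mul
        hK)).aemeasurable]
    have inner : ∀ u : ℝ, (∫⁻ x in Ioi (0:ℝ),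
          ENNReal.ofReal (Real.exp (-(s*x))) * Kbig α ν f ((t, x), u))
        = Set.indicator (Ioi (0:ℝ))
            (fun u => ENNReal.ofReal (Real.exp (-(s*u)) * condStable α f t u)
              * ENNReal.ofReal ((1/s) ^ ν * Real.Gamma ν)) u := by
      intro u
      by_cases hu : u ∈ Ioi (0:ℝ)
      · rw [Set.indicator_of_mem hu]
        have hu0 : (0:ℝ) < u := hu
        have e2 : ∀ x : ℝ, ENNReal.ofReal (Real.exp (-(s*x))) * Kbig α ν f ((t, x), u)
            = Set.indicator (Ici u) (fun x => ENNReal.ofReal (Real.exp (-(s*x)) * (x-u) ^ (ν-1))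
                * ENNReal.ofReal (condStable α f t u)) x := by
          intro x
          by_cases hxu : x ∈ Ici u
          · rw [Set.indicator_of_mem hxu, Kbig,
              Set.indicator_of_mem (show ((t,x),u) ∈ {q : (ℝ×ℝ)×ℝ | q.2 ∈ Ioc 0 q.1.2} from ⟨hu0, hxu⟩)]
            rw [← ENNReal.ofReal_mul (Real.exp_nonneg _),
              ← ENNReal.ofReal_mul (mul_nonneg (Real.exp_nonneg _)
                (Real.rpow_nonneg (sub_nonneg.mpr hxu) _))]
            congr 1
            ring
          · rw [Set.indicator_of_notMem hxu, Kbig,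
              Set.indicator_of_notMem (show ((t,x),u) ∉ {q : (ℝ×ℝ)×ℝ | q.2 ∈ Ioc 0 q.1.2} from
                fun h => hxu h.2), mul_zero]
        simp only [e2]
        rw [lintegral_indicator measurableSet_Ici,
          Measure.restrict_restrict measurableSet_Ici,
          inter_eq_left.mpr (show Ici u ⊆ Ioi 0 from fun x hx => lt_of_lt_of_le hu0 hx),
          ← Measure.restrict_congr_set Ioi_ae_eq_Ici,
          lintegral_mul_const' _ _ ENNReal.ofReal_ne_top,
          lint_kernel u hs hν,
          ← ENNReal.ofReal_mul (mul_nonneg (Real.exp_nonneg _) (by positivity)),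
          ← ENNReal.ofReal_mul (mul_nonneg (Real.exp_nonneg _) (hcs_nn _))]
        congr 1
        ring
      · rw [Set.indicator_of_notMem hu]
        have hz : ∀ x : ℝ, Kbig α ν f ((t, x), u) = 0 := fun x => by
          rw [Kbig, Set.indicator_of_notMem]
          exact fun h => hu h.1
        simp [hz]
    simp only [inner]
    rw [lintegral_indicator measurableSet_Ioi,
      lintegral_mul_const' _ _ ENNReal.ofReal_ne_top,
      lap_cond_lint hα0 hmeas hnn hint hlap ht hs]
  have hmeasJ : Measurable fun x => ENNReal.ofReal (Real.exp (-(s*x))) * Jbig α ν f (t, x) := by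
    exact (by fun_prop : Measurable fun x : ℝ => ENNReal.ofReal (Real.exp (-(s*x)))).mul
      ((Jbig_meas hmeas).comp (by fun_prop))
  have hfin : ∀ᵐ x ∂(volume.restrict (Ioi (0:ℝ))),
      ENNReal.ofReal (Real.exp (-(s*x))) * Jbig α ν f (t,x) < ⊤ := by
    apply ae_lt_top hmeasJ
    rw [key]
    exact ENNReal.mul_ne_top ENNReal.ofReal_ne_top ENNReal.ofReal_ne_top
  have hcongr : ∀ᵐ x ∂(volume.restrict (Ioi (0:ℝ))),
      ENNReal.ofReal (Real.exp (-(s*x)) * RL ν (condStable α f t) x)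
        = ENNReal.ofReal (1 / Real.Gamma ν)
            * (ENNReal.ofReal (Real.exp (-(s*x))) * Jbig α ν f (t,x)) := by
    filter_upwards [hfin, self_mem_ae_restrict measurableSet_Ioi] with x hxfin hx
    have hx0 : (0:ℝ) < x := hx
    have hJfin : Jbig α ν f (t,x) ≠ ⊤ := by
      intro hcon
      rw [hcon, ENNReal.mul_top (by simp [Real.exp_pos])] at hxfin
      exact (lt_irrefl _ hxfin).elim
    rw [RL_eq hmeas hnn ht hx0]
    conv_rhs => rw [← ENNReal.ofReal_toReal hJfin]
    rw [← ENNReal.ofReal_mul (Real.exp_nonneg _),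
      ← ENNReal.ofReal_mul (by positivity : (0:ℝ) ≤ 1/Real.Gamma ν)]
    congr 1
    ring
  rw [lintegral_congr_ae hcongr,
    lintegral_const_mul' _ _ ENNReal.ofReal_ne_top, key,
    ← ENNReal.ofReal_mul (by positivity),
    ← ENNReal.ofReal_mul (by positivity)]
  congr 1
  field_simp

lemma lint_gamma {a c : ℝ} (ha : 0 < a) (hc : 0 < c) :
    ∫⁻ t in Ioi (0:ℝ), ENNReal.ofReal (t ^ (c-1) * Real.exp (-(a*t)))
      = ENNReal.ofReal ((1/a) ^ c * Real.Gamma c) := by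
  have hint : IntegrableOn (fun t : ℝ => t ^ (c-1) * Real.exp (-(a*t))) (Ioi 0) := by
    apply (integrableOn_rpow_mul_exp_neg_mul_rpow (by linarith : (-1:ℝ) < c - 1)
      zero_lt_one ha).congr_fun _ measurableSet_Ioi
    intro x hx
    simp only [Real.rpow_one]
    ring_nf
  rw [← ofReal_integral_eq_lintegral_ofReal hint ?_, integral_rpow_mul_exp_neg_mul_Ioi hc ha]
  filter_upwards [self_mem_ae_restrict measurableSet_Ioi] with t htt
  have ht0 : (0:ℝ) < t := htt
  positivity

theorem stmt_5 (α : ℝ) (hα0 : 0 < α) (hα1 : α < 1)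
    (f : ℝ → ℝ) (hmeas : Measurable f) (hnn : ∀ x, 0 ≤ f x)
    (hint : Integrable f) (hsupp : ∀ x < (0:ℝ), f x = 0)
    (hlap : ∀ s > (0:ℝ),
      (∫ x in Set.Ioi (0:ℝ), Real.exp (-(s * x)) * f x) = Real.exp (-(s ^ α)))
    (γ β θ lam : ℝ) (hγ : 0 < γ) (hβ : α * γ < β) (hθ : -(α * γ) < θ) (hlam : 0 ≤ lam)
    (M : ℝ → ℝ)
    (hM : ∀ x, M x = (1 / Real.Gamma (γ + θ / α)) *
      ∫ t in Set.Ioi (0:ℝ),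
        RL (β - α * γ) (condStable α f t) x * t ^ (γ + θ / α - 1) * Real.exp (-(lam * t))) :
    ∀ s > (0:ℝ),
      (∫ x in Set.Ioi (0:ℝ), Real.exp (-(s * x)) * M x)
        = s ^ (α * γ - β) / (lam + s ^ α) ^ (γ + θ / α) := by
  intro s hs
  set ν : ℝ := β - α * γ with hνdef
  set c : ℝ := γ + θ / α with hcdef
  have hν : 0 < ν := by rw [hνdef]; linarith
  have hc : 0 < c := by
    have h1 : -γ < θ / α := by rw [lt_div_iff₀ hα0]; nlinarith
    rw [hcdef]; linarith
  have hΓν : 0 < Real.Gamma ν := Real.Gamma_pos_of_pos hν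
  have hΓc : 0 < Real.Gamma c := Real.Gamma_pos_of_pos hc
  have hsα : 0 < s ^ α := Real.rpow_pos_of_pos hs α
  have ha : 0 < lam + s ^ α := by linarith
  have hRnn : ∀ t x : ℝ, 0 < t → 0 < x → 0 ≤ RL ν (condStable α f t) x := by
    intro t x ht hx
    rw [RL_eq hmeas hnn ht hx]
    positivity
  set G : ℝ × ℝ → ℝ :=
    fun p => 1 / Real.Gamma ν * (Jbig α ν f p).toReal
      * (p.1 ^ (c - 1) * Real.exp (-(lam * p.1))) with hGdef
  have hG_meas : Measurable G := by
    apply Measurable.mul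
    · exact measurable_const.mul (ENNReal.measurable_toReal.comp (Jbig_meas hmeas))
    · fun_prop
  have hG_eq : ∀ t x : ℝ, 0 < t → 0 < x →
      G (t, x) = RL ν (condStable α f t) x * t ^ (c - 1) * Real.exp (-(lam * t)) := by
    intro t x ht hx
    rw [hGdef, RL_eq hmeas hnn ht hx]
    ring
  have hG_nn : ∀ t x : ℝ, 0 < t → 0 ≤ G (t, x) := by
    intro t x ht
    rw [hGdef]
    have h2 : (0:ℝ) ≤ 1 / Real.Gamma ν := by positivity
    positivity
  set P : ℝ → ℝ≥0∞ := fun x => ∫⁻ t in Ioi 0, ENNReal.ofReal (G (t, x)) with hPdef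
  have hP_meas : Measurable P :=
    Measurable.lintegral_prod_right'
      (ENNReal.measurable_ofReal.comp (hG_meas.comp measurable_swap))
  have hM_eq : ∀ x : ℝ, 0 < x → M x = (1 / Real.Gamma c) * (P x).toReal := by
    intro x hx
    rw [hM x]
    congr 1
    rw [integral_eq_lintegral_of_nonneg_ae ?nn ?sm]
    case nn =>
      filter_upwards [self_mem_ae_restrict measurableSet_Ioi] with t ht
      have ht0 : (0:ℝ) < t := ht
      have := hRnn t x ht0 hx
      positivity
    case sm =>
      apply AEStronglyMeasurable.congr
        ((hG_meas.comp (measurable_id.prodMk measurable_const)).aestronglyMeasurable)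
      filter_upwards [self_mem_ae_restrict measurableSet_Ioi] with t ht
      exact (hG_eq t x ht hx)
    congr 1
    apply lintegral_congr_ae
    filter_upwards [self_mem_ae_restrict measurableSet_Ioi] with t ht
    rw [hG_eq t x ht hx]
  have hnnM : 0 ≤ᵐ[volume.restrict (Ioi (0:ℝ))] fun x => Real.exp (-(s*x)) * M x := by
    filter_upwards [self_mem_ae_restrict measurableSet_Ioi] with x hx
    have hx0 : (0:ℝ) < x := hx
    rw [hM_eq x hx0]
    positivity
  have hmeasM : AEStronglyMeasurable (fun x => Real.exp (-(s*x)) * M x)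
      (volume.restrict (Ioi (0:ℝ))) := by
    apply AEStronglyMeasurable.congr
      (f := fun x => Real.exp (-(s*x)) * (1 / Real.Gamma c * (P x).toReal))
    · exact ((by fun_prop : Measurable fun x : ℝ => Real.exp (-(s*x))).mul
        (measurable_const.mul (ENNReal.measurable_toReal.comp hP_meas))).aestronglyMeasurable
    · filter_upwards [self_mem_ae_restrict measurableSet_Ioi] with x hx
      rw [hM_eq x hx]
  rw [integral_eq_lintegral_of_nonneg_ae hnnM hmeasM]
  have hswap : Measurable fun p : ℝ × ℝ =>
      ENNReal.ofReal (Real.exp (-(s*p.1)) * (1 / Real.Gamma c))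
        * ENNReal.ofReal (G (p.2, p.1)) := by
    apply Measurable.fun_mul
    · fun_prop
    · exact ENNReal.measurable_ofReal.comp (hG_meas.comp measurable_swap)
  have key2 : ∫⁻ x in Ioi (0:ℝ),
        ENNReal.ofReal (Real.exp (-(s*x)) * (1 / Real.Gamma c)) * P x
      = ENNReal.ofReal ((1/s) ^ ν * (1 / Real.Gamma c))
          * ENNReal.ofReal ((1/(lam + s^α)) ^ c * Real.Gamma c) := by
    have e1 : ∀ x : ℝ, ENNReal.ofReal (Real.exp (-(s*x)) * (1 / Real.Gamma c)) * P x
        = ∫⁻ t in Ioi 0, ENNReal.ofReal (Real.exp (-(s*x)) * (1 / Real.Gamma c))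
            * ENNReal.ofReal (G (t, x)) := by
      intro x
      rw [hPdef]
      exact (lintegral_const_mul' _ _ ENNReal.ofReal_ne_top).symm
    simp only [e1]
    rw [lintegral_lintegral_swap hswap.aemeasurable]
    have inner : ∀ t : ℝ, t ∈ Ioi (0:ℝ) →
        (∫⁻ x in Ioi (0:ℝ), ENNReal.ofReal (Real.exp (-(s*x)) * (1 / Real.Gamma c))
            * ENNReal.ofReal (G (t, x)))
          = ENNReal.ofReal ((1/s) ^ ν * (1 / Real.Gamma c))
              * ENNReal.ofReal (t ^ (c-1) * Real.exp (-((lam + s^α) * t))) := by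
      intro t ht
      have ht0 : (0:ℝ) < t := ht
      have e2 : ∀ x : ℝ, x ∈ Ioi (0:ℝ) →
          ENNReal.ofReal (Real.exp (-(s*x)) * (1 / Real.Gamma c)) * ENNReal.ofReal (G (t, x))
            = ENNReal.ofReal (t ^ (c-1) * Real.exp (-(lam * t)) * (1 / Real.Gamma c))
                * ENNReal.ofReal (Real.exp (-(s*x)) * RL ν (condStable α f t) x) := by
        intro x hx
        have hx0 : (0:ℝ) < x := hx
        rw [hG_eq t x ht0 hx0,
          ← ENNReal.ofReal_mul (mul_nonneg (Real.exp_nonneg _) (by positivity)),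
          ← ENNReal.ofReal_mul (mul_nonneg (mul_nonneg (by positivity) (Real.exp_nonneg _))
            (by positivity))]
        congr 1
        ring
      rw [setLIntegral_congr_fun measurableSet_Ioi e2,
        lintegral_const_mul' _ _ ENNReal.ofReal_ne_top,
        lapRL hα0 hmeas hnn hint hlap hν ht0 hs,
        ← ENNReal.ofReal_mul (mul_nonneg (mul_nonneg (by positivity : (0:ℝ) ≤ t ^ (c-1))
          (Real.exp_nonneg _)) (by positivity)),
        ← ENNReal.ofReal_mul (mul_nonneg (by positivity : (0:ℝ) ≤ (1/s) ^ ν) (by positivity))]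
      congr 1
      rw [show Real.exp (-((lam + s^α) * t)) = Real.exp (-(lam * t)) * Real.exp (-(t * s^α)) by
        rw [← Real.exp_add]; ring_nf]
      ring
    rw [lintegral_congr_ae ((ae_restrict_iff' measurableSet_Ioi).mpr (ae_of_all _ inner)),
      lintegral_const_mul' _ _ ENNReal.ofReal_ne_top, lint_gamma ha hc]
  have hfin2 : ∀ᵐ x ∂(volume.restrict (Ioi (0:ℝ))),
      ENNReal.ofReal (Real.exp (-(s*x)) * (1 / Real.Gamma c)) * P x < ⊤ := by
    apply ae_lt_top ((by fun_prop : Measurable fun x : ℝ =>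
      ENNReal.ofReal (Real.exp (-(s*x)) * (1 / Real.Gamma c))).fun_mul hP_meas)
    rw [key2]
    exact ENNReal.mul_ne_top ENNReal.ofReal_ne_top ENNReal.ofReal_ne_top
  have hcongr2 : ∀ᵐ x ∂(volume.restrict (Ioi (0:ℝ))),
      ENNReal.ofReal (Real.exp (-(s*x)) * M x)
        = ENNReal.ofReal (Real.exp (-(s*x)) * (1 / Real.Gamma c)) * P x := by
    filter_upwards [hfin2, self_mem_ae_restrict measurableSet_Ioi] with x hxfin hx
    have hx0 : (0:ℝ) < x := hx
    have hPfin : P x ≠ ⊤ := by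
      intro hcon
      rw [hcon, ENNReal.mul_top (ENNReal.ofReal_pos.mpr (by positivity)).ne'] at hxfin
      exact (lt_irrefl _ hxfin).elim
    rw [hM_eq x hx0]
    conv_rhs => rw [← ENNReal.ofReal_toReal hPfin]
    rw [← ENNReal.ofReal_mul (mul_nonneg (Real.exp_nonneg _) (by positivity))]
    congr 1
    ring
  rw [lintegral_congr_ae hcongr2, key2,
    ← ENNReal.ofReal_mul (by positivity), ENNReal.toReal_ofReal (by positivity)]
  rw [show α * γ - β = -ν by rw [hνdef]; ring, Real.rpow_neg hs.le,
    show ((1:ℝ)/s) ^ ν = (s ^ ν)⁻¹ by rw [one_div, Real.inv_rpow hs.le],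
    show ((1:ℝ)/(lam + s^α)) ^ c = ((lam + s^α) ^ c)⁻¹ by rw [one_div, Real.inv_rpow ha.le]]
  have hsν : (0:ℝ) < s ^ ν := Real.rpow_pos_of_pos hs ν
  have hac : (0:ℝ) < (lam + s^α) ^ c := Real.rpow_pos_of_pos ha c
  field_simp
end

section
/- Let 0 < α < 1 and let f_α be the one-sided stable density. Then for every λ ≥ 0 and almost every x > 0, the one-parameter Mittag-Leffler function satisfies E_α(−λ x^α) = (x/α) ∫_0^∞ f_α(x t^{−1/α}) t^{−1/α−1} e^{−λ t} dt. -/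
open MeasureTheory Real

open Set
open scoped ENNReal NNReal

section StableAux

lemma gamma_shift_le {α z : ℝ} (hα0 : 0 < α) (hα1 : α < 1) (hz : 0 < z) :
    Real.Gamma (z + 1) ≤ Real.Gamma (z + α) * (z + α) ^ (1 - α) := by
  have hzα : 0 < z + α := by linarith
  have h := Real.Gamma_mul_add_mul_le_rpow_Gamma_mul_rpow_Gamma
    (s := z + α) (t := z + α + 1) (a := α) (b := 1 - α) hzα (by linarith) hα0
    (by linarith) (by ring)
  have harg : α * (z + α) + (1 - α) * (z + α + 1) = z + 1 := by ring
  rw [harg] at h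
  have hG : 0 < Real.Gamma (z + α) := Real.Gamma_pos_of_pos hzα
  calc Real.Gamma (z + 1) ≤ Real.Gamma (z + α) ^ α * Real.Gamma (z + α + 1) ^ (1 - α) := h
    _ = Real.Gamma (z + α) ^ α * ((z + α) * Real.Gamma (z + α)) ^ (1 - α) := by
        rw [Real.Gamma_add_one hzα.ne']
    _ = Real.Gamma (z + α) ^ α * Real.Gamma (z + α) ^ (1 - α) * (z + α) ^ (1 - α) := by
        rw [Real.mul_rpow hzα.le hG.le]; ring
    _ = Real.Gamma (z + α) * (z + α) ^ (1 - α) := by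
        rw [← Real.rpow_add hG]; norm_num

lemma summable_ml {α : ℝ} (hα0 : 0 < α) (hα1 : α < 1) {s : ℝ} (hs : 0 ≤ s) :
    Summable (fun k : ℕ => s ^ k / Real.Gamma (α * k + 1)) := by
  refine summable_of_ratio_norm_eventually_le (r := 1/2) (by norm_num) ?_
  have htend : Filter.Tendsto (fun k : ℕ => (α * k + 1) ^ α) Filter.atTop Filter.atTop := by
    apply (tendsto_rpow_atTop hα0).comp
    apply Filter.tendsto_atTop_add_const_right
    exact Filter.Tendsto.const_mul_atTop hα0 tendsto_natCast_atTop_atTop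
  filter_upwards [htend.eventually_ge_atTop (4 * s + 1)] with k hk
  set z : ℝ := α * k + 1 with hzdef
  have hk0 : (0:ℝ) ≤ α * k := by positivity
  have hz1 : (1:ℝ) ≤ z := by linarith
  have hz : 0 < z := by linarith
  have hzα : 0 < z + α := by linarith
  have hG : 0 < Real.Gamma z := Real.Gamma_pos_of_pos hz
  have hGα : 0 < Real.Gamma (z + α) := Real.Gamma_pos_of_pos hzα
  have harg : α * ((k:ℕ) + 1 : ℕ) + 1 = z + α := by push_cast; ring
  rw [harg]
  have hzpow : 0 < z ^ (-α) := Real.rpow_pos_of_pos hz _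
  have hpow : (z + α) ^ (1 - α) ≤ (z + α) * z ^ (-α) := by
    have h1 : (z + α) ^ (1 - α) = (z + α) * (z + α) ^ (-α) := by
      rw [show (1 - α) = 1 + (-α) by ring, Real.rpow_add hzα, Real.rpow_one]
    rw [h1]
    have : (z + α) ^ (-α) ≤ z ^ (-α) :=
      Real.rpow_le_rpow_of_nonpos hz (by linarith) (by linarith)
    nlinarith
  have hkey : 2 * s * Real.Gamma z ≤ Real.Gamma (z + α) := by
    have h1 := gamma_shift_le hα0 hα1 hz
    rw [Real.Gamma_add_one hz.ne'] at h1
    have h2 : z * Real.Gamma z ≤ Real.Gamma (z + α) * ((z + α) * z ^ (-α)) :=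
      h1.trans (mul_le_mul_of_nonneg_left hpow hGα.le)
    have hza : z ^ α * z ^ (-α) = 1 := by
      rw [← Real.rpow_add hz]; norm_num
    have h3 : 2 * s * (z + α) ≤ z * ((4:ℝ) * s + 1) := by nlinarith
    have h4 : 2 * s * (z + α) * z ^ (-α) ≤ z := by
      calc 2 * s * (z + α) * z ^ (-α) ≤ z * ((4:ℝ) * s + 1) * z ^ (-α) :=
            mul_le_mul_of_nonneg_right h3 hzpow.le
        _ ≤ z * z ^ α * z ^ (-α) :=
            mul_le_mul_of_nonneg_right (by nlinarith) hzpow.le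
        _ = z := by rw [mul_assoc, hza, mul_one]
    have h5 : 2 * s * (z * Real.Gamma z) ≤ Real.Gamma (z + α) * z := by
      calc 2 * s * (z * Real.Gamma z)
          ≤ 2 * s * (Real.Gamma (z + α) * ((z + α) * z ^ (-α))) :=
            mul_le_mul_of_nonneg_left h2 (by linarith)
        _ = Real.Gamma (z + α) * (2 * s * (z + α) * z ^ (-α)) := by ring
        _ ≤ Real.Gamma (z + α) * z := mul_le_mul_of_nonneg_left h4 hGα.le
    nlinarith [h5, hz, hG, hGα]
  rw [Real.norm_of_nonneg (by positivity), Real.norm_of_nonneg (by positivity)]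
  rw [show (1:ℝ)/2 * (s ^ k / Real.Gamma z) = s ^ k / (2 * Real.Gamma z) by ring,
    div_le_div_iff₀ hGα (by positivity), pow_succ]
  nlinarith [mul_le_mul_of_nonneg_left hkey (pow_nonneg hs k)]

lemma claimA_aux {α : ℝ} {k : ℕ} {x : ℝ} (hx0 : 0 < x) :
    x ^ (α - 1) * (Real.exp (-(x ^ α)) * (x ^ α) ^ ((k:ℝ) - 1))
      = x ^ (α * k - 1) * Real.exp (-(x ^ α)) := by
  have h1 : (x ^ α) ^ ((k:ℝ) - 1) = x ^ (α * ((k:ℝ) - 1)) := by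
    rw [← Real.rpow_mul hx0.le]
  rw [h1]
  calc x ^ (α - 1) * (Real.exp (-(x ^ α)) * x ^ (α * ((k:ℝ) - 1)))
      = (x ^ (α - 1) * x ^ (α * ((k:ℝ) - 1))) * Real.exp (-(x ^ α)) := by ring
    _ = x ^ (α * k - 1) * Real.exp (-(x ^ α)) := by
        rw [← Real.rpow_add hx0, show α - 1 + α * ((k:ℝ) - 1) = α * k - 1 by ring]

lemma claimA_integrable {α : ℝ} (hα0 : 0 < α) {k : ℕ} (hk : 0 < k) :
    IntegrableOn (fun t : ℝ => t ^ (α * k - 1) * Real.exp (-(t ^ α))) (Ioi 0) := by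
  have hg : IntegrableOn (fun y : ℝ => Real.exp (-y) * y ^ ((k:ℝ) - 1)) (Ioi 0) :=
    Real.GammaIntegral_convergent (by exact_mod_cast hk)
  have := (integrableOn_Ioi_comp_rpow_iff' (fun y : ℝ => Real.exp (-y) * y ^ ((k:ℝ) - 1))
    (p := α) hα0.ne').mpr hg
  refine this.congr_fun (fun x hx => ?_) measurableSet_Ioi
  simpa only [smul_eq_mul] using claimA_aux (α := α) (k := k) hx

lemma claimA_value {α : ℝ} (hα0 : 0 < α) {k : ℕ} (hk : 0 < k) :
    ∫ t in Ioi 0, t ^ (α * k - 1) * Real.exp (-(t ^ α)) = Real.Gamma k / α := by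
  have h := integral_comp_rpow_Ioi_of_pos
    (g := fun y : ℝ => Real.exp (-y) * y ^ ((k:ℝ) - 1)) hα0
  have hGk : Real.Gamma k = ∫ y in Ioi 0, Real.exp (-y) * y ^ ((k:ℝ) - 1) :=
    Real.Gamma_eq_integral (by exact_mod_cast hk)
  rw [← hGk] at h
  have heq : ∀ x ∈ Ioi (0:ℝ), (α * x ^ (α - 1)) • (Real.exp (-(x ^ α)) * (x ^ α) ^ ((k:ℝ) - 1))
      = α * (x ^ (α * k - 1) * Real.exp (-(x ^ α))) := by
    intro x hx
    have hx0 : (0:ℝ) < x := hx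
    simp only [smul_eq_mul]
    rw [mul_assoc, claimA_aux (α := α) (k := k) hx0]
  rw [setIntegral_congr_fun measurableSet_Ioi heq, integral_const_mul] at h
  field_simp at h ⊢
  linarith [h]

lemma claimC_integrable {a u : ℝ} (ha : 0 < a) (hu : 0 < u) :
    IntegrableOn (fun t : ℝ => t ^ (a - 1) * Real.exp (-(u * t))) (Ioi 0) := by
  have hg : IntegrableOn (fun x : ℝ => Real.exp (-x) * x ^ (a - 1)) (Ioi 0) :=
    Real.GammaIntegral_convergent ha
  have h1 : IntegrableOn (fun t : ℝ => Real.exp (-(u * t)) * (u * t) ^ (a - 1)) (Ioi 0) := by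
    have := (integrableOn_Ioi_comp_mul_left_iff
      (fun x : ℝ => Real.exp (-x) * x ^ (a - 1)) 0 hu).mpr (by simpa using hg)
    simpa using this
  have h2 : IntegrableOn
      (fun t : ℝ => (u ^ (a - 1))⁻¹ * (Real.exp (-(u * t)) * (u * t) ^ (a - 1))) (Ioi 0) :=
    h1.const_mul ((u ^ (a - 1))⁻¹)
  refine h2.congr_fun (fun t ht => ?_) measurableSet_Ioi
  have ht0 : (0:ℝ) < t := ht
  beta_reduce; rw [Real.mul_rpow hu.le ht0.le]
  field_simp [(Real.rpow_pos_of_pos hu (a-1)).ne']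

variable {α : ℝ} {f : ℝ → ℝ}

lemma int_exp_f (hmeas : Measurable f) (hnn : ∀ x, 0 ≤ f x) (hint : Integrable f)
    {s : ℝ} (hs : 0 ≤ s) :
    IntegrableOn (fun u => Real.exp (-(s * u)) * f u) (Ioi 0) := by
  refine Integrable.mono' (hint.restrict (s := Ioi 0)) ?_ ?_
  · exact ((Real.continuous_exp.comp (continuous_const.mul continuous_id).neg).measurable.mul
      hmeas).aestronglyMeasurable
  · filter_upwards [self_mem_ae_restrict (measurableSet_Ioi : MeasurableSet (Ioi (0:ℝ)))]
      with u hu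
    have hu0 : (0:ℝ) < u := hu
    have h1 : Real.exp (-(s * u)) ≤ 1 := by
      rw [Real.exp_le_one_iff]; nlinarith
    rw [Real.norm_eq_abs, abs_mul, abs_of_nonneg (hnn u), abs_of_nonneg (Real.exp_pos _).le]
    nlinarith [hnn u]

lemma mass_one (hα0 : 0 < α) (hα1 : α < 1)
    (hmeas : Measurable f) (hnn : ∀ x, 0 ≤ f x) (hint : Integrable f)
    (hlap : ∀ s > (0:ℝ),
      (∫ x in Set.Ioi (0:ℝ), Real.exp (-(s * x)) * f x) = Real.exp (-(s ^ α))) :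
    ∫ u in Ioi (0:ℝ), f u = 1 := by
  -- dominated convergence along s = 1/(n+1)
  have hF : ∀ n : ℕ, (∫ x in Ioi (0:ℝ), Real.exp (-((((n:ℝ)+1)⁻¹) * x)) * f x)
      = Real.exp (-((((n:ℝ)+1)⁻¹) ^ α)) := by
    intro n
    exact hlap _ (by positivity)
  have htendsto : Filter.Tendsto
      (fun n : ℕ => ∫ x in Ioi (0:ℝ), Real.exp (-((((n:ℝ)+1)⁻¹) * x)) * f x)
      Filter.atTop (nhds (∫ x in Ioi (0:ℝ), f x)) := by
    refine MeasureTheory.tendsto_integral_of_dominated_convergence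
      (fun x => f x) (fun n => ?_) (hint.restrict) (fun n => ?_) ?_
    · exact ((Real.continuous_exp.comp
        (continuous_const.mul continuous_id).neg).measurable.mul hmeas).aestronglyMeasurable
    · filter_upwards [self_mem_ae_restrict (measurableSet_Ioi : MeasurableSet (Ioi (0:ℝ)))]
        with u hu
      have hu0 : (0:ℝ) < u := hu
      have h1 : Real.exp (-((((n:ℝ)+1)⁻¹) * u)) ≤ 1 := by
        rw [Real.exp_le_one_iff]
        have : (0:ℝ) ≤ (((n:ℝ)+1)⁻¹) * u := by positivity
        linarith
      rw [Real.norm_eq_abs, abs_mul, abs_of_nonneg (hnn u), abs_of_nonneg (Real.exp_pos _).le]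
      nlinarith [hnn u]
    · filter_upwards [self_mem_ae_restrict (measurableSet_Ioi : MeasurableSet (Ioi (0:ℝ)))]
        with u hu
      have : Filter.Tendsto (fun n : ℕ => -((((n:ℝ)+1)⁻¹) * u)) Filter.atTop (nhds 0) := by
        have h0 : Filter.Tendsto (fun n : ℕ => (((n:ℝ)+1)⁻¹)) Filter.atTop (nhds 0) :=
          tendsto_one_div_add_atTop_nhds_zero_nat.congr (fun n => by rw [one_div])
        simpa using (h0.mul_const u).neg
      have := ((Real.continuous_exp.tendsto 0).comp this).mul_const (f u)
      simpa using this
  have hlim : Filter.Tendsto (fun n : ℕ => Real.exp (-((((n:ℝ)+1)⁻¹) ^ α)))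
      Filter.atTop (nhds 1) := by
    have h0 : Filter.Tendsto (fun n : ℕ => (((n:ℝ)+1)⁻¹)) Filter.atTop (nhds 0) :=
      tendsto_one_div_add_atTop_nhds_zero_nat.congr (fun n => by rw [one_div])
    have hc : ContinuousAt (fun x : ℝ => x ^ α) 0 :=
      Real.continuousAt_rpow_const 0 α (Or.inr hα0.le)
    have h1 : Filter.Tendsto (fun n : ℕ => (((n:ℝ)+1)⁻¹) ^ α) Filter.atTop (nhds 0) := by
      have := hc.tendsto.comp h0
      simpa [Real.zero_rpow hα0.ne', Function.comp_def] using this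
    have h2 : Filter.Tendsto (fun n : ℕ => -((((n:ℝ)+1)⁻¹) ^ α)) Filter.atTop (nhds 0) := by
      simpa using h1.neg
    have := (Real.continuous_exp.tendsto 0).comp h2
    simpa [Function.comp_def] using this
  have h3 := htendsto.congr (fun n => (hF n))
  exact (tendsto_nhds_unique h3 hlim)

lemma moment_lint (hα0 : 0 < α) (hα1 : α < 1)
    (hmeas : Measurable f) (hnn : ∀ x, 0 ≤ f x) (hint : Integrable f)
    (hlap : ∀ s > (0:ℝ),
      (∫ x in Set.Ioi (0:ℝ), Real.exp (-(s * x)) * f x) = Real.exp (-(s ^ α)))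
    (k : ℕ) :
    ∫⁻ u in Ioi (0:ℝ), ENNReal.ofReal (u ^ (-(α * k)) * f u)
      = ENNReal.ofReal ((k.factorial : ℝ) / Real.Gamma (α * k + 1)) := by
  rcases Nat.eq_zero_or_pos k with rfl | hk'
  · simp only [Nat.cast_zero, mul_zero, neg_zero, Real.rpow_zero, one_mul,
      Nat.factorial_zero, Nat.cast_one, zero_add, Real.Gamma_one, div_one]
    rw [← ofReal_integral_eq_lintegral_ofReal hint.restrict
      (Filter.Eventually.of_forall (fun u => hnn u)),
      mass_one hα0 hα1 hmeas hnn hint hlap]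
  · obtain ⟨m, rfl⟩ : ∃ m, k = m + 1 := ⟨k - 1, (Nat.succ_pred_eq_of_pos hk').symm⟩
    have hk : 0 < m + 1 := hk'
    set β : ℝ := α * (m + 1 : ℕ) with hβdef
    have hβ : 0 < β := by positivity
    have hGβ : 0 < Real.Gamma β := Real.Gamma_pos_of_pos hβ
    have hcne0 : ENNReal.ofReal (Real.Gamma β) ≠ 0 := by
      simp [ENNReal.ofReal_eq_zero, not_le, hGβ]
    have hcinv_ne_top : (ENNReal.ofReal (Real.Gamma β))⁻¹ ≠ ⊤ := by
      simp [ENNReal.inv_ne_top, hcne0]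
    -- pointwise representation for u > 0
    have hrep : ∀ u ∈ Ioi (0:ℝ),
        ENNReal.ofReal (u ^ (-β) * f u)
          = (ENNReal.ofReal (Real.Gamma β))⁻¹ *
              ∫⁻ s in Ioi (0:ℝ), ENNReal.ofReal (s ^ (β - 1) * Real.exp (-(s * u)) * f u) := by
      intro u hu
      have hu0 : (0:ℝ) < u := hu
      have hCint : IntegrableOn (fun s : ℝ => s ^ (β - 1) * Real.exp (-(u * s))) (Ioi 0) :=
        claimC_integrable hβ hu0
      have hCval : ∫ s in Ioi (0:ℝ), s ^ (β - 1) * Real.exp (-(u * s))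
          = (1 / u) ^ β * Real.Gamma β := integral_rpow_mul_exp_neg_mul_Ioi hβ hu0
      have h1 : ∫⁻ s in Ioi (0:ℝ), ENNReal.ofReal (s ^ (β - 1) * Real.exp (-(s * u)) * f u)
          = (∫⁻ s in Ioi (0:ℝ), ENNReal.ofReal (s ^ (β - 1) * Real.exp (-(u * s))))
              * ENNReal.ofReal (f u) := by
        rw [← lintegral_mul_const' (ENNReal.ofReal (f u)) _ ENNReal.ofReal_ne_top]
        refine setLIntegral_congr_fun measurableSet_Ioi
          (fun s hs => ?_)
        have hs0 : (0:ℝ) < s := hs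
        rw [← ENNReal.ofReal_mul (by positivity)]
        rw [mul_comm s u]
      have h2 : ∫⁻ s in Ioi (0:ℝ), ENNReal.ofReal (s ^ (β - 1) * Real.exp (-(u * s)))
          = ENNReal.ofReal ((1 / u) ^ β * Real.Gamma β) := by
        rw [← hCval]
        refine (ofReal_integral_eq_lintegral_ofReal hCint ?_).symm
        filter_upwards [self_mem_ae_restrict (measurableSet_Ioi : MeasurableSet (Ioi (0:ℝ)))]
          with s hs
        have : (0:ℝ) < s := hs
        positivity
      rw [h1, h2]
      rw [show (1 / u) ^ β = u ^ (-β) by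
        rw [one_div, ← Real.rpow_neg_one u, ← Real.rpow_mul hu0.le, neg_one_mul]]
      rw [ENNReal.ofReal_mul (by positivity), ENNReal.ofReal_mul (by positivity)]
      rw [← mul_assoc, ← mul_assoc]
      congr 1
      rw [mul_comm _ (ENNReal.ofReal (u ^ (-β))), mul_assoc,
        ENNReal.inv_mul_cancel hcne0 ENNReal.ofReal_ne_top, mul_one]
    rw [setLIntegral_congr_fun measurableSet_Ioi hrep]
    rw [lintegral_const_mul' _ _ hcinv_ne_top]
    -- swap the double lintegral
    have hswap : ∫⁻ u in Ioi (0:ℝ), ∫⁻ s in Ioi (0:ℝ),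
          ENNReal.ofReal (s ^ (β - 1) * Real.exp (-(s * u)) * f u)
        = ∫⁻ s in Ioi (0:ℝ), ∫⁻ u in Ioi (0:ℝ),
          ENNReal.ofReal (s ^ (β - 1) * Real.exp (-(s * u)) * f u) := by
      refine lintegral_lintegral_swap (Measurable.aemeasurable ?_)
      have hm1 : Measurable (fun t : ℝ => t ^ (β - 1)) := by measurability
      have hm : Measurable (fun p : ℝ × ℝ =>
          ENNReal.ofReal (p.2 ^ (β - 1) * Real.exp (-(p.2 * p.1)) * f p.1)) :=
        (((hm1.comp measurable_snd).mul
          (Real.measurable_exp.comp (measurable_snd.mul measurable_fst).neg)).mul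
          (hmeas.comp measurable_fst)).ennreal_ofReal
      exact hm
    rw [hswap]
    -- inner integral over u
    have hinner : ∀ s ∈ Ioi (0:ℝ),
        ∫⁻ u in Ioi (0:ℝ), ENNReal.ofReal (s ^ (β - 1) * Real.exp (-(s * u)) * f u)
          = ENNReal.ofReal (s ^ (α * ((m + 1 : ℕ) : ℝ) - 1) * Real.exp (-(s ^ α))) := by
      intro s hs
      have hs0 : (0:ℝ) < s := hs
      have h1 : ∀ u : ℝ, ENNReal.ofReal (s ^ (β - 1) * Real.exp (-(s * u)) * f u)
          = ENNReal.ofReal (s ^ (β - 1)) * ENNReal.ofReal (Real.exp (-(s * u)) * f u) := by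
        intro u
        rw [mul_assoc, ENNReal.ofReal_mul (by positivity)]
      rw [lintegral_congr (fun u => h1 u), lintegral_const_mul' _ _ ENNReal.ofReal_ne_top]
      rw [← ofReal_integral_eq_lintegral_ofReal (int_exp_f hmeas hnn hint hs0.le) ?_]
      · rw [hlap s hs0, ← ENNReal.ofReal_mul (by positivity)]
      · exact Filter.Eventually.of_forall (fun u => mul_nonneg (Real.exp_pos _).le (hnn u))
    rw [setLIntegral_congr_fun measurableSet_Ioi hinner]
    rw [← ofReal_integral_eq_lintegral_ofReal (claimA_integrable hα0 hk) ?_]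
    · rw [claimA_value hα0 hk]
      -- arithmetic
      have hΓ1 : Real.Gamma (α * ((m + 1 : ℕ) : ℝ) + 1) = β * Real.Gamma β := Real.Gamma_add_one hβ.ne'
      have hΓk : Real.Gamma ((m + 1 : ℕ) : ℝ) = m.factorial := by
        push_cast
        exact Real.Gamma_nat_eq_factorial m
      have hfact : (((m+1).factorial : ℕ) : ℝ) = ((m:ℝ) + 1) * m.factorial := by
        rw [Nat.factorial_succ]; push_cast; ring
      have harith : (((m+1).factorial : ℕ) : ℝ) / Real.Gamma (α * (m + 1 : ℕ) + 1)
          = (Real.Gamma ((m + 1 : ℕ) : ℝ) / α) / Real.Gamma β := by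
        rw [hΓ1, hΓk, hfact, hβdef]
        have hm1 : ((m:ℝ) + 1) ≠ 0 := by positivity
        push_cast
        field_simp
      rw [harith, ENNReal.ofReal_div_of_pos hGβ, ENNReal.div_eq_inv_mul]
    · filter_upwards [self_mem_ae_restrict (measurableSet_Ioi : MeasurableSet (Ioi (0:ℝ)))]
        with s hs
      have : (0:ℝ) < s := hs
      positivity

lemma key (hα0 : 0 < α) (hα1 : α < 1)
    (hmeas : Measurable f) (hnn : ∀ x, 0 ≤ f x) (hint : Integrable f)
    (hlap : ∀ s > (0:ℝ),
      (∫ x in Set.Ioi (0:ℝ), Real.exp (-(s * x)) * f x) = Real.exp (-(s ^ α)))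
    {s : ℝ} (hs : 0 ≤ s) :
    ∫ u in Ioi (0:ℝ), f u * Real.exp (-(s * u ^ (-α)))
      = ∑' k : ℕ, (-s) ^ k / Real.Gamma (α * k + 1) := by
  set F : ℕ → ℝ → ℝ := fun k u => ((-s) ^ k / (k.factorial : ℝ)) * (u ^ (-(α * k)) * f u)
    with hFdef
  have hGpos : ∀ k : ℕ, 0 < Real.Gamma (α * k + 1) := fun k =>
    Real.Gamma_pos_of_pos (by positivity)
  have hmk : ∀ k : ℕ, Measurable (fun u : ℝ => u ^ (-(α * k))) := fun k => by measurability
  have hFmeas : ∀ k : ℕ, AEStronglyMeasurable (F k) (volume.restrict (Ioi (0:ℝ))) := fun k =>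
    (((hmk k).mul hmeas).const_mul _).aestronglyMeasurable
  -- each moment integral (real version)
  have hmom : ∀ k : ℕ, ∫ u in Ioi (0:ℝ), u ^ (-(α * k)) * f u
      = (k.factorial : ℝ) / Real.Gamma (α * k + 1) := by
    intro k
    have hnnae : 0 ≤ᵐ[volume.restrict (Ioi (0:ℝ))] fun u : ℝ => u ^ (-(α * k)) * f u := by
      filter_upwards [self_mem_ae_restrict (measurableSet_Ioi : MeasurableSet (Ioi (0:ℝ)))]
        with u hu
      have : (0:ℝ) < u := hu
      have := hnn u
      positivity
    rw [integral_eq_lintegral_of_nonneg_ae hnnae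
      (((hmk k).mul hmeas).aestronglyMeasurable),
      moment_lint hα0 hα1 hmeas hnn hint hlap k, ENNReal.toReal_ofReal (by positivity)]
  -- lintegral of each |F k|
  have hFlint : ∀ k : ℕ, (∫⁻ u in Ioi (0:ℝ), ‖F k u‖₊)
      = ENNReal.ofReal (s ^ k / Real.Gamma (α * k + 1)) := by
    intro k
    have heq : ∀ u ∈ Ioi (0:ℝ),
        (‖F k u‖₊ : ENNReal) = ENNReal.ofReal (s ^ k / (k.factorial : ℝ))
          * ENNReal.ofReal (u ^ (-(α * k)) * f u) := by
      intro u hu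
      have hu0 : (0:ℝ) < u := hu
      rw [← ENNReal.ofReal_mul (by positivity), ← show ∀ x : ℝ, ENNReal.ofReal ‖x‖ = (‖x‖₊ : ENNReal) from fun x => ofReal_norm x]
      congr 1
      rw [hFdef]
      simp only [Real.norm_eq_abs, abs_mul, abs_div, abs_pow, abs_neg, abs_of_nonneg hs,
        Nat.abs_cast,
        abs_of_nonneg (Real.rpow_nonneg hu0.le _), abs_of_nonneg (hnn u)]
    rw [lintegral_congr_ae ((ae_restrict_iff' measurableSet_Ioi).mpr
      (Filter.Eventually.of_forall heq))]
    rw [lintegral_const_mul' _ _ ENNReal.ofReal_ne_top,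
      moment_lint hα0 hα1 hmeas hnn hint hlap k,
      ← ENNReal.ofReal_mul (by positivity)]
    congr 1
    have hf0 : ((k.factorial : ℝ)) ≠ 0 := by positivity
    field_simp
  -- summability of lintegrals
  have hF' : (∑' k : ℕ, ∫⁻ u in Ioi (0:ℝ), ‖F k u‖₊) ≠ ⊤ := by
    rw [tsum_congr hFlint, ← ENNReal.ofReal_tsum_of_nonneg
      (fun k => by positivity) (summable_ml hα0 hα1 hs)]
    exact ENNReal.ofReal_ne_top
  have hswap := MeasureTheory.integral_tsum hFmeas hF'
  -- identify pointwise sum with the exponential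
  have hpt : ∀ u ∈ Ioi (0:ℝ), (∑' k : ℕ, F k u) = f u * Real.exp (-(s * u ^ (-α))) := by
    intro u hu
    have hu0 : (0:ℝ) < u := hu
    have hexp : Real.exp (-(s * u ^ (-α)))
        = ∑' k : ℕ, (-(s * u ^ (-α))) ^ k / (k.factorial : ℝ) := by
      rw [Real.exp_eq_exp_ℝ, NormedSpace.exp_eq_tsum_div]
    have hterm : ∀ k : ℕ, F k u = ((-(s * u ^ (-α))) ^ k / (k.factorial : ℝ)) * f u := by
      intro k
      rw [hFdef]
      have h1 : (u ^ (-α)) ^ (k : ℕ) = u ^ (-(α * k)) := by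
        rw [← Real.rpow_natCast (u ^ (-α)) k, ← Real.rpow_mul hu0.le]
        ring_nf
      rw [show (-(s * u ^ (-α))) = (-s) * u ^ (-α) by ring, mul_pow, h1]
      ring
    rw [tsum_congr hterm, tsum_mul_right, ← hexp, mul_comm]
  have hL : ∫ u in Ioi (0:ℝ), f u * Real.exp (-(s * u ^ (-α)))
      = ∫ u in Ioi (0:ℝ), ∑' k : ℕ, F k u :=
    setIntegral_congr_fun measurableSet_Ioi (fun u hu => (hpt u hu).symm)
  rw [hL, hswap]
  refine tsum_congr (fun k => ?_)
  simp only [hFdef]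
  rw [integral_const_mul, hmom k]
  have hf0 : ((k.factorial : ℝ)) ≠ 0 := by positivity
  field_simp

end StableAux

theorem stmt_7 (α : ℝ) (hα0 : 0 < α) (hα1 : α < 1)
    (f : ℝ → ℝ) (hmeas : Measurable f) (hnn : ∀ x, 0 ≤ f x)
    (hint : Integrable f) (hsupp : ∀ x < (0:ℝ), f x = 0)
    (hlap : ∀ s > (0:ℝ),
      (∫ x in Set.Ioi (0:ℝ), Real.exp (-(s * x)) * f x) = Real.exp (-(s ^ α)))
    (lam : ℝ) (hlam : 0 ≤ lam) :
    ∀ᵐ x ∂(volume.restrict (Set.Ioi (0:ℝ))),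
      mittagLeffler α (-(lam * x ^ α))
        = (x / α) *
            ∫ t in Set.Ioi (0:ℝ),
              f (x * t ^ (-(1/α))) * t ^ (-(1/α) - 1) * Real.exp (-(lam * t)) := by
  filter_upwards [self_mem_ae_restrict (measurableSet_Ioi : MeasurableSet (Ioi (0:ℝ)))]
    with x hx
  have hx0 : (0:ℝ) < x := hx
  set s : ℝ := lam * x ^ α with hsdef
  have hs : 0 ≤ s := by positivity
  have hmain := key hα0 hα1 hmeas hnn hint hlap hs
  -- substitution
  have h1 : (∫ t in Ioi (0:ℝ),
        f (x * t ^ (-(1/α))) * t ^ (-(1/α) - 1) * Real.exp (-(lam * t)))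
      = α * (x⁻¹ * ∫ v in Ioi (0:ℝ), f v * Real.exp (-(s * v ^ (-α)))) := by
    rw [← integral_comp_rpow_Ioi
      (fun t => f (x * t ^ (-(1/α))) * t ^ (-(1/α) - 1) * Real.exp (-(lam * t)))
      (show -α ≠ 0 by simpa using hα0.ne')]
    have h2 := integral_comp_mul_left_Ioi
      (fun v => f v * Real.exp (-(s * v ^ (-α)))) 0 hx0
    simp only [mul_zero, smul_eq_mul] at h2
    rw [← h2, ← integral_const_mul]
    refine setIntegral_congr_fun measurableSet_Ioi (fun u hu => ?_)
    have hu0 : (0:ℝ) < u := hu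
    have e1 : (u ^ (-α)) ^ (-(1/α)) = u := by
      rw [← Real.rpow_mul hu0.le, show (-α) * (-(1/α)) = 1 by field_simp, Real.rpow_one]
    have e2 : (u ^ (-α)) ^ (-(1/α) - 1) = u ^ (1 + α) := by
      rw [← Real.rpow_mul hu0.le, show (-α) * (-(1/α) - 1) = 1 + α by field_simp; ring]
    have e3 : u ^ (-α - 1) * u ^ (1 + α) = 1 := by
      rw [← Real.rpow_add hu0, show (-α - 1) + (1 + α) = 0 by ring, Real.rpow_zero]
    have e4 : s * (x * u) ^ (-α) = lam * u ^ (-α) := by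
      rw [Real.mul_rpow hx0.le hu0.le, hsdef]
      have : x ^ α * x ^ (-α) = 1 := by
        rw [← Real.rpow_add hx0, show α + -α = 0 by ring, Real.rpow_zero]
      calc lam * x ^ α * (x ^ (-α) * u ^ (-α))
          = lam * (x ^ α * x ^ (-α)) * u ^ (-α) := by ring
        _ = lam * u ^ (-α) := by rw [this]; ring
    simp only [smul_eq_mul]
    rw [abs_neg, abs_of_pos hα0, e1, e2, e4]
    calc α * u ^ (-α - 1) *
          (f (x * u) * u ^ (1 + α) * Real.exp (-(lam * u ^ (-α))))
        = (u ^ (-α - 1) * u ^ (1 + α)) * (α * (f (x * u) * Real.exp (-(lam * u ^ (-α))))) := by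
          ring
      _ = α * (f (x * u) * Real.exp (-(lam * u ^ (-α)))) := by rw [e3, one_mul]
  rw [h1, hmain]
  show (∑' k : ℕ, (-s) ^ k / Real.Gamma (α * k + 1)) = _
  field_simp
end

section
/- Let 0 < α < 1, let f_α be the one-sided stable density and f_α(x|t) = t^{-1/α} f_α(x t^{-1/α}) its conditional version at scale t > 0. Let γ > 0, β > αγ and θ > −αγ. Then the four-parameter measure dQ^γ_{α,β,θ}(t) = (1/Γ(γ + θ/α)) (I₊^{β−αγ} f_α(·|t))(1) t^{γ+θ/α−1} dt has total mass 1/Γ(β + θ); that is, ∫_0^∞ (I₊^{β−αγ} f_α(·|t))(1) t^{γ+θ/α−1} dt = Γ(γ + θ/α) / Γ(β + θ). -/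
open MeasureTheory Real

open Set ENNReal

lemma myCoV {s : Set ℝ} {g : ℝ → ℝ} {g' : ℝ → ℝ}
    (hs : MeasurableSet s) (hg' : ∀ x ∈ s, HasDerivWithinAt g (g' x) s x)
    (hg : Set.InjOn g s) (F : ℝ → ℝ≥0∞) :
    ∫⁻ x in g '' s, F x = ∫⁻ x in s, ENNReal.ofReal |g' x| * F (g x) := by
  simpa only [ContinuousLinearMap.det_toSpanSingleton] using
    lintegral_image_eq_lintegral_abs_det_fderiv_mul volume hs
      (fun x hx => (hg' x hx).hasFDerivWithinAt) hg F

lemma myCoV_mul {r : ℝ} (hr : 0 < r) (F : ℝ → ℝ≥0∞) :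
    ∫⁻ x in Ioi (0:ℝ), F x = ∫⁻ y in Ioi (0:ℝ), ENNReal.ofReal r * F (r * y) := by
  have himg : (fun y : ℝ => r * y) '' Ioi 0 = Ioi 0 := by
    ext x
    constructor
    · rintro ⟨y, hy, rfl⟩; exact mul_pos hr hy
    · intro hx; exact ⟨x / r, div_pos hx hr, by field_simp⟩
  have hderiv : ∀ y ∈ Ioi (0:ℝ), HasDerivWithinAt (fun y : ℝ => r * y) r (Ioi 0) y := by
    intro y _
    simpa using ((hasDerivAt_id y).const_mul r).hasDerivWithinAt
  have hinj : Set.InjOn (fun y : ℝ => r * y) (Ioi 0) :=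
    fun a _ b _ h => by simpa [hr.ne'] using h
  conv_lhs => rw [← himg]
  rw [myCoV measurableSet_Ioi hderiv hinj F, abs_of_pos hr]

lemma myCoV_rpow {c : ℝ} (hc : c ≠ 0) (F : ℝ → ℝ≥0∞) :
    ∫⁻ x in Ioi (0:ℝ), F x
      = ∫⁻ y in Ioi (0:ℝ), ENNReal.ofReal (|c| * y ^ (c - 1)) * F (y ^ c) := by
  have a1 : ∀ x : ℝ, x ∈ Ioi (0:ℝ) →
      HasDerivWithinAt (fun t : ℝ => t ^ c) (c * x ^ (c - 1)) (Ioi 0) x :=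
    fun x hx => (Real.hasDerivAt_rpow_const (Or.inl (mem_Ioi.mp hx).ne')).hasDerivWithinAt
  have a2 : Set.InjOn (fun x : ℝ => x ^ c) (Ioi 0) := by
    rcases lt_or_gt_of_ne hc with (h | h)
    · apply StrictAntiOn.injOn
      intro x hx y hy hxy
      rw [← inv_lt_inv₀ (rpow_pos_of_pos hx c) (rpow_pos_of_pos hy c), ← Real.rpow_neg (le_of_lt hx),
        ← Real.rpow_neg (le_of_lt hy)]
      exact Real.rpow_lt_rpow (le_of_lt hx) hxy (neg_pos.mpr h)
    exact StrictMonoOn.injOn fun x hx y _ hxy => Real.rpow_lt_rpow (mem_Ioi.mp hx).le hxy h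
  have a3 : (fun t : ℝ => t ^ c) '' Ioi 0 = Ioi 0 := by
    ext1 x; rw [mem_image]; constructor
    · rintro ⟨y, hy, rfl⟩; exact rpow_pos_of_pos hy c
    · intro hx; refine ⟨x ^ (1 / c), rpow_pos_of_pos hx _, ?_⟩
      rw [← Real.rpow_mul (le_of_lt hx), one_div_mul_cancel hc, Real.rpow_one]
  conv_lhs => rw [← a3]
  rw [myCoV measurableSet_Ioi a1 a2 F]
  refine setLIntegral_congr_fun_ae measurableSet_Ioi (.of_forall fun y hy => ?_)
  rw [abs_mul, abs_of_nonneg (Real.rpow_nonneg (le_of_lt hy) _)]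

lemma lintegral_Gamma' {q : ℝ} (hq : 0 < q) :
    ∫⁻ x in Set.Ioi (0:ℝ), ENNReal.ofReal (Real.exp (-x) * x ^ (q - 1))
      = ENNReal.ofReal (Real.Gamma q) := by
  rw [Real.Gamma_eq_integral hq,
    ofReal_integral_eq_lintegral_ofReal (Real.GammaIntegral_convergent hq)]
  filter_upwards [ae_restrict_mem measurableSet_Ioi] with x hx
  have : (0:ℝ) < x := hx
  positivity

lemma lintegral_rpow_exp_neg_mul {q r : ℝ} (hq : 0 < q) (hr : 0 < r) :
    ∫⁻ s in Ioi (0:ℝ), ENNReal.ofReal (s ^ (q-1) * Real.exp (-(s*r)))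
      = ENNReal.ofReal (r ^ (-q) * Real.Gamma q) := by
  rw [myCoV_mul (inv_pos.mpr hr)]
  have h1 : ∀ y ∈ Ioi (0:ℝ), ENNReal.ofReal r⁻¹
        * ENNReal.ofReal ((r⁻¹*y) ^ (q-1) * Real.exp (-((r⁻¹*y)*r)))
      = ENNReal.ofReal (r ^ (-q)) * ENNReal.ofReal (Real.exp (-y) * y ^ (q-1)) := by
    intro y hy
    have hy' : (0:ℝ) < y := hy
    rw [← ENNReal.ofReal_mul (inv_nonneg.mpr hr.le), ← ENNReal.ofReal_mul (by positivity)]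
    congr 1
    rw [show (r⁻¹ * y) * r = y by field_simp,
      Real.mul_rpow (inv_nonneg.mpr hr.le) hy'.le, Real.inv_rpow hr.le, ← Real.rpow_neg_one r,
      ← Real.rpow_neg hr.le]
    rw [show r ^ (-1:ℝ) * (r ^ (-(q-1)) * y ^ (q-1) * rexp (-y))
        = (r ^ (-1:ℝ) * r ^ (-(q-1))) * (rexp (-y) * y ^ (q-1)) by ring,
      ← Real.rpow_add hr]
    congr 2
    ring
  rw [setLIntegral_congr_fun_ae measurableSet_Ioi (.of_forall h1), lintegral_const_mul, lintegral_Gamma' hq,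
    ← ENNReal.ofReal_mul (by positivity)]
  exact ((measurable_exp.comp measurable_neg).mul (by fun_prop : Measurable fun y : ℝ => y ^ (q-1))).ennreal_ofReal

lemma laplace_lin {α : ℝ} {f : ℝ → ℝ} (hmeas : Measurable f) (hnn : ∀ x, 0 ≤ f x)
    (hint : Integrable f)
    (hlap : ∀ s > (0:ℝ), (∫ x in Set.Ioi (0:ℝ), Real.exp (-(s * x)) * f x) = Real.exp (-(s ^ α)))
    {s : ℝ} (hs : 0 < s) :
    ∫⁻ x in Ioi (0:ℝ), ENNReal.ofReal (Real.exp (-(s*x)) * f x)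
      = ENNReal.ofReal (Real.exp (-(s^α))) := by
  rw [← hlap s hs, ofReal_integral_eq_lintegral_ofReal]
  · refine Integrable.mono hint.integrableOn ?_ ?_
    · exact ((measurable_exp.comp ((measurable_const.mul measurable_id).neg)).mul
        hmeas).aestronglyMeasurable
    · filter_upwards [ae_restrict_mem measurableSet_Ioi] with x hx
      have hx' : (0:ℝ) < x := hx
      rw [Real.norm_eq_abs, Real.norm_eq_abs, abs_of_nonneg (mul_nonneg (Real.exp_nonneg _) (hnn x)),
        abs_of_nonneg (hnn x)]
      exact mul_le_of_le_one_left (hnn x) (Real.exp_le_one_iff.mpr (by nlinarith))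
  · filter_upwards [ae_restrict_mem measurableSet_Ioi] with x hx
    have hx' : (0:ℝ) < x := hx
    exact mul_nonneg (Real.exp_nonneg _) (hnn x)

lemma moment_lin {α : ℝ} (hα0 : 0 < α) {f : ℝ → ℝ} (hmeas : Measurable f) (hnn : ∀ x, 0 ≤ f x)
    (hint : Integrable f)
    (hlap : ∀ s > (0:ℝ), (∫ x in Set.Ioi (0:ℝ), Real.exp (-(s * x)) * f x) = Real.exp (-(s ^ α)))
    {q : ℝ} (hq : 0 < q) :
    ∫⁻ x in Ioi (0:ℝ), ENNReal.ofReal (x ^ (-(α*q)) * f x)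
      = ENNReal.ofReal (Real.Gamma q / (α * Real.Gamma (α*q))) := by
  set p := α * q with hpdef
  have hp : 0 < p := mul_pos hα0 hq
  have key : ENNReal.ofReal (Real.Gamma p)
        * ∫⁻ x in Ioi (0:ℝ), ENNReal.ofReal (x ^ (-p) * f x)
      = ENNReal.ofReal (Real.Gamma q / α) := by
    rw [← lintegral_const_mul' _ _ ofReal_ne_top]
    have step1 : ∀ x ∈ Ioi (0:ℝ), ENNReal.ofReal (Real.Gamma p) * ENNReal.ofReal (x ^ (-p) * f x)
        = ∫⁻ s in Ioi (0:ℝ), ENNReal.ofReal (s ^ (p-1) * Real.exp (-(s*x))) * ENNReal.ofReal (f x) := by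
      intro x hx
      have hx' : (0:ℝ) < x := hx
      rw [lintegral_mul_const' _ _ ofReal_ne_top, lintegral_rpow_exp_neg_mul hp hx',
        ← ENNReal.ofReal_mul (by positivity), ← ENNReal.ofReal_mul (by positivity)]
      ring_nf
    rw [setLIntegral_congr_fun_ae measurableSet_Ioi (.of_forall step1),
      lintegral_lintegral_swap (by fun_prop)]
    have step2 : ∀ s ∈ Ioi (0:ℝ),
        (∫⁻ x in Ioi (0:ℝ), ENNReal.ofReal (s ^ (p-1) * Real.exp (-(s*x))) * ENNReal.ofReal (f x))
          = ENNReal.ofReal (s ^ (p-1) * Real.exp (-(s^α))) := by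
      intro s hs
      have hs' : (0:ℝ) < s := hs
      calc (∫⁻ x in Ioi (0:ℝ), ENNReal.ofReal (s ^ (p-1) * Real.exp (-(s*x))) * ENNReal.ofReal (f x))
          = ∫⁻ x in Ioi (0:ℝ), ENNReal.ofReal (s ^ (p-1)) * ENNReal.ofReal (Real.exp (-(s*x)) * f x) := by
            refine setLIntegral_congr_fun_ae measurableSet_Ioi (.of_forall fun x _ => ?_)
            rw [← ENNReal.ofReal_mul (by positivity), ← ENNReal.ofReal_mul (by positivity), mul_assoc]
        _ = ENNReal.ofReal (s ^ (p-1)) * ENNReal.ofReal (Real.exp (-(s^α))) := by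
            rw [lintegral_const_mul' _ _ ofReal_ne_top, laplace_lin hmeas hnn hint hlap hs']
        _ = ENNReal.ofReal (s ^ (p-1) * Real.exp (-(s^α))) := by
            rw [← ENNReal.ofReal_mul (by positivity)]
    rw [setLIntegral_congr_fun_ae measurableSet_Ioi (.of_forall step2),
      myCoV_rpow (c := 1/α) (by positivity)]
    have step3 : ∀ y ∈ Ioi (0:ℝ),
        ENNReal.ofReal (|1/α| * y ^ (1/α - 1))
            * ENNReal.ofReal ((y ^ (1/α)) ^ (p-1) * Real.exp (-((y ^ (1/α)) ^ α)))
          = ENNReal.ofReal (1/α) * ENNReal.ofReal (Real.exp (-y) * y ^ (q - 1)) := by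
      intro y hy
      have hy' : (0:ℝ) < y := hy
      rw [← ENNReal.ofReal_mul (by positivity), ← ENNReal.ofReal_mul (by positivity)]
      congr 1
      rw [abs_of_pos (by positivity : (0:ℝ) < 1/α), ← Real.rpow_mul hy'.le, ← Real.rpow_mul hy'.le,
        one_div_mul_cancel hα0.ne', Real.rpow_one]
      rw [show 1/α * y ^ (1/α - 1) * (y ^ (1/α * (p-1)) * rexp (-y))
          = 1/α * ((y ^ (1/α - 1) * y ^ (1/α * (p-1))) * rexp (-y)) by ring,
        ← Real.rpow_add hy',
        show 1/α - 1 + 1/α * (p-1) = q - 1 by rw [hpdef]; field_simp; ring]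
      ring
    rw [setLIntegral_congr_fun_ae measurableSet_Ioi (.of_forall step3),
      lintegral_const_mul' _ _ ofReal_ne_top, lintegral_Gamma' hq,
      ← ENNReal.ofReal_mul (by positivity)]
    congr 1
    field_simp
  calc ∫⁻ x in Ioi (0:ℝ), ENNReal.ofReal (x ^ (-p) * f x)
      = (ENNReal.ofReal (Real.Gamma p))⁻¹ * (ENNReal.ofReal (Real.Gamma p)
          * ∫⁻ x in Ioi (0:ℝ), ENNReal.ofReal (x ^ (-p) * f x)) := by
        rw [← mul_assoc, ENNReal.inv_mul_cancel (by simp [Real.Gamma_pos_of_pos hp]) ofReal_ne_top,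
          one_mul]
    _ = ENNReal.ofReal (Real.Gamma q / (α * Real.Gamma p)) := by
        rw [key, ← ENNReal.ofReal_inv_of_pos (Real.Gamma_pos_of_pos hp),
          ← ENNReal.ofReal_mul (by positivity)]
        rw [div_eq_mul_inv, div_eq_mul_inv, mul_inv]
        ring

lemma beta_real {a b : ℝ} (ha : 0 < a) (hb : 0 < b) :
    ∫ u in Ioo (0:ℝ) 1, u ^ (a-1) * (1-u) ^ (b-1)
      = Real.Gamma a * Real.Gamma b / Real.Gamma (a+b) := by
  have ha' : 0 < (a:ℂ).re := by simpa using ha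
  have hb' : 0 < (b:ℂ).re := by simpa using hb
  have hC := Complex.Gamma_mul_Gamma_eq_betaIntegral ha' hb'
  have hβ : Complex.betaIntegral a b
      = ((∫ u in Ioo (0:ℝ) 1, u ^ (a-1) * (1-u) ^ (b-1) : ℝ) : ℂ) := by
    rw [Complex.betaIntegral, intervalIntegral.integral_of_le zero_le_one,
      MeasureTheory.integral_Ioc_eq_integral_Ioo]
    refine Eq.trans (setIntegral_congr_fun measurableSet_Ioo fun x hx => ?_) integral_ofReal
    obtain ⟨hx0, hx1⟩ := hx
    show (x:ℂ) ^ ((a:ℂ) - 1) * (1 - (x:ℂ)) ^ ((b:ℂ) - 1)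
        = ((x ^ (a - 1) * (1 - x) ^ (b - 1) : ℝ) : ℂ)
    rw [Complex.ofReal_mul, Complex.ofReal_cpow hx0.le, Complex.ofReal_cpow (by linarith : (0:ℝ) ≤ 1-x)]
    push_cast
    ring
  rw [hβ] at hC
  have hgap : (0:ℝ) < Real.Gamma (a+b) := Real.Gamma_pos_of_pos (by linarith)
  have : Real.Gamma a * Real.Gamma b = Real.Gamma (a+b) * ∫ u in Ioo (0:ℝ) 1, u ^ (a-1) * (1-u) ^ (b-1) := by
    have := hC
    rw [← Complex.ofReal_add, Complex.Gamma_ofReal, Complex.Gamma_ofReal, Complex.Gamma_ofReal,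
      ← Complex.ofReal_mul, ← Complex.ofReal_mul] at this
    exact_mod_cast this
  rw [this]
  field_simp

lemma beta_integrable {a b : ℝ} (ha : 0 < a) (hb : 0 < b) :
    IntegrableOn (fun u : ℝ => u ^ (a-1) * (1-u) ^ (b-1)) (Ioo (0:ℝ) 1) := by
  have ha' : 0 < (a:ℂ).re := by simpa using ha
  have hb' : 0 < (b:ℂ).re := by simpa using hb
  have h := ((Complex.betaIntegral_convergent ha' hb').norm).1
  have h' : IntegrableOn (fun x : ℝ => ‖(x : ℂ) ^ ((a:ℂ) - 1) * (1 - (x : ℂ)) ^ ((b:ℂ) - 1)‖)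
      (Ioo (0:ℝ) 1) := h.mono_set Ioo_subset_Ioc_self
  refine h'.congr_fun (fun x hx => ?_) measurableSet_Ioo
  obtain ⟨hx0, hx1⟩ := hx
  beta_reduce
  rw [norm_mul,
    Complex.norm_cpow_eq_rpow_re_of_pos hx0,
    show (1 - (x:ℂ)) = (((1 - x : ℝ)):ℂ) by push_cast; ring,
    Complex.norm_cpow_eq_rpow_re_of_pos (by linarith)]
  simp

lemma beta_lin {a b : ℝ} (ha : 0 < a) (hb : 0 < b) :
    ∫⁻ u in Ioo (0:ℝ) 1, ENNReal.ofReal (u ^ (a-1) * (1-u) ^ (b-1))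
      = ENNReal.ofReal (Real.Gamma a * Real.Gamma b / Real.Gamma (a+b)) := by
  rw [← beta_real ha hb, ofReal_integral_eq_lintegral_ofReal (beta_integrable ha hb)]
  filter_upwards [ae_restrict_mem measurableSet_Ioo] with x hx
  obtain ⟨hx0, hx1⟩ := hx
  have h1 : (0:ℝ) < 1 - x := by linarith
  positivity

lemma inner_t {α : ℝ} (hα0 : 0 < α) {f : ℝ → ℝ} (hmeas : Measurable f) (hnn : ∀ x, 0 ≤ f x)
    (hint : Integrable f)
    (hlap : ∀ s > (0:ℝ), (∫ x in Set.Ioi (0:ℝ), Real.exp (-(s * x)) * f x) = Real.exp (-(s ^ α)))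
    {q : ℝ} (hq : 0 < q) {u : ℝ} (hu0 : 0 < u) :
    ∫⁻ t in Ioi (0:ℝ), ENNReal.ofReal (t ^ (q - 1 - 1/α) * f (u * t ^ (-(1/α))))
      = ENNReal.ofReal (u ^ (α*q - 1)) * ENNReal.ofReal (Real.Gamma q / Real.Gamma (α*q)) := by
  have hgp : Real.Gamma (α*q) ≠ 0 := (Real.Gamma_pos_of_pos (mul_pos hα0 hq)).ne'
  rw [myCoV_rpow (c := -α) (neg_ne_zero.mpr hα0.ne')]
  have step1 : ∀ y ∈ Ioi (0:ℝ),
      ENNReal.ofReal (|(-α)| * y ^ (-α - 1))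
          * ENNReal.ofReal ((y ^ (-α)) ^ (q - 1 - 1/α) * f (u * (y ^ (-α)) ^ (-(1/α))))
        = ENNReal.ofReal α * ENNReal.ofReal (y ^ (-(α*q)) * f (u * y)) := by
    intro y hy
    have hy' : (0:ℝ) < y := hy
    rw [← Real.rpow_mul hy'.le, ← Real.rpow_mul hy'.le,
      show -α * -(1/α) = 1 by field_simp, Real.rpow_one,
      ← ENNReal.ofReal_mul (by positivity), ← ENNReal.ofReal_mul (by positivity)]
    congr 1
    rw [abs_of_neg (neg_neg_iff_pos.mpr hα0), neg_neg,
      show α * y ^ (-α - 1) * (y ^ (-α * (q - 1 - 1/α)) * f (u * y))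
        = α * ((y ^ (-α - 1) * y ^ (-α * (q - 1 - 1/α))) * f (u * y)) by ring,
      ← Real.rpow_add hy', show -α - 1 + -α * (q - 1 - 1/α) = -(α*q) by field_simp; ring]
  rw [setLIntegral_congr_fun_ae measurableSet_Ioi (.of_forall step1),
    lintegral_const_mul' _ _ ofReal_ne_top, myCoV_mul (inv_pos.mpr hu0)]
  have step2 : ∀ x ∈ Ioi (0:ℝ),
      ENNReal.ofReal u⁻¹ * ENNReal.ofReal ((u⁻¹ * x) ^ (-(α*q)) * f (u * (u⁻¹ * x)))
        = ENNReal.ofReal (u ^ (α*q - 1)) * ENNReal.ofReal (x ^ (-(α*q)) * f x) := by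
    intro x hx
    have hx' : (0:ℝ) < x := hx
    rw [show u * (u⁻¹ * x) = x by field_simp,
      ← ENNReal.ofReal_mul (by positivity), ← ENNReal.ofReal_mul (by positivity)]
    congr 1
    rw [Real.mul_rpow (inv_nonneg.mpr hu0.le) hx'.le, Real.inv_rpow hu0.le,
      Real.rpow_neg hu0.le, inv_inv,
      show u⁻¹ * (u ^ (α*q) * x ^ (-(α*q)) * f x)
        = (u⁻¹ * u ^ (α*q)) * (x ^ (-(α*q)) * f x) by ring,
      show u⁻¹ = u ^ (-1:ℝ) by rw [Real.rpow_neg_one], ← Real.rpow_add hu0,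
      show (-1:ℝ) + α*q = α*q - 1 by ring]
  rw [setLIntegral_congr_fun_ae measurableSet_Ioi (.of_forall step2),
    lintegral_const_mul' _ _ ofReal_ne_top, moment_lin hα0 hmeas hnn hint hlap hq]
  calc ENNReal.ofReal α * (ENNReal.ofReal (u ^ (α*q-1))
          * ENNReal.ofReal (Real.Gamma q / (α * Real.Gamma (α*q))))
      = ENNReal.ofReal (α * (u ^ (α*q-1) * (Real.Gamma q / (α * Real.Gamma (α*q))))) := by
        rw [← ENNReal.ofReal_mul (by positivity), ← ENNReal.ofReal_mul hα0.le]
    _ = ENNReal.ofReal (u ^ (α*q-1) * (Real.Gamma q / Real.Gamma (α*q))) := by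
        congr 1; field_simp
    _ = ENNReal.ofReal (u ^ (α*q-1)) * ENNReal.ofReal (Real.Gamma q / Real.Gamma (α*q)) := by
        rw [← ENNReal.ofReal_mul (by positivity)]


theorem stmt_10 (α : ℝ) (hα0 : 0 < α) (hα1 : α < 1)
    (f : ℝ → ℝ) (hmeas : Measurable f) (hnn : ∀ x, 0 ≤ f x)
    (hint : Integrable f) (hsupp : ∀ x < (0:ℝ), f x = 0)
    (hlap : ∀ s > (0:ℝ),
      (∫ x in Set.Ioi (0:ℝ), Real.exp (-(s * x)) * f x) = Real.exp (-(s ^ α)))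
    (γ β θ : ℝ) (hγ : 0 < γ) (hβ : α * γ < β) (hθ : -(α * γ) < θ) :
    (∫ t in Set.Ioi (0:ℝ), RL (β - α * γ) (condStable α f t) 1 * t ^ (γ + θ / α - 1))
      = Real.Gamma (γ + θ / α) / Real.Gamma (β + θ) := by
  set q : ℝ := γ + θ / α with hqdef
  have hq : 0 < q := by
    have h1 : 0 < α * γ + θ := by linarith
    have h2 : q = (α * γ + θ) / α := by rw [hqdef]; field_simp
    rw [h2]; positivity
  set ν : ℝ := β - α * γ with hνdef
  have hν : 0 < ν := by rw [hνdef]; linarith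
  have hνγ : Real.Gamma ν ≠ 0 := (Real.Gamma_pos_of_pos hν).ne'
  have hpν : α * q + ν = β + θ := by rw [hqdef, hνdef]; field_simp; ring
  have hβθ : (0:ℝ) < β + θ := by rw [← hpν]; positivity
  have hβθγ : Real.Gamma (β + θ) ≠ 0 := (Real.Gamma_pos_of_pos hβθ).ne'
  have hRL : ∀ t ∈ Ioi (0:ℝ), RL ν (condStable α f t) 1 * t ^ (q - 1)
      = (1 / Real.Gamma ν) * ((∫ u in Ioo (0:ℝ) 1,
          (1-u) ^ (ν-1) * (t ^ (-(1/α)) * f (u * t ^ (-(1/α))))) * t ^ (q-1)) := by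
    intro t ht
    rw [RL, intervalIntegral.integral_of_le zero_le_one,
      MeasureTheory.integral_Ioc_eq_integral_Ioo]
    simp only [condStable]
    ring
  rw [setIntegral_congr_fun measurableSet_Ioi hRL, MeasureTheory.integral_const_mul]
  have hmh : Measurable (Function.uncurry fun t u : ℝ =>
      (1-u) ^ (ν-1) * (t ^ (-(1/α)) * f (u * t ^ (-(1/α))))) := by
    apply Measurable.mul
    · fun_prop
    · apply Measurable.mul
      · fun_prop
      · exact hmeas.comp (by fun_prop)
  have hJ : (∫⁻ t in Ioi (0:ℝ), (∫⁻ u in Ioo (0:ℝ) 1,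
        ENNReal.ofReal ((1-u) ^ (ν-1) * (t ^ (-(1/α)) * f (u * t ^ (-(1/α))))))
        * ENNReal.ofReal (t ^ (q-1)))
      = ENNReal.ofReal (Real.Gamma ν * Real.Gamma q / Real.Gamma (β + θ)) := by
    calc (∫⁻ t in Ioi (0:ℝ), (∫⁻ u in Ioo (0:ℝ) 1,
        ENNReal.ofReal ((1-u) ^ (ν-1) * (t ^ (-(1/α)) * f (u * t ^ (-(1/α))))))
        * ENNReal.ofReal (t ^ (q-1)))
        = ∫⁻ t in Ioi (0:ℝ), ∫⁻ u in Ioo (0:ℝ) 1,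
            ENNReal.ofReal ((1-u) ^ (ν-1) * (t ^ (-(1/α)) * f (u * t ^ (-(1/α)))))
            * ENNReal.ofReal (t ^ (q-1)) := by
          refine setLIntegral_congr_fun_ae measurableSet_Ioi (.of_forall fun t ht => ?_)
          rw [lintegral_mul_const' _ _ ofReal_ne_top]
      _ = ∫⁻ u in Ioo (0:ℝ) 1, ∫⁻ t in Ioi (0:ℝ),
            ENNReal.ofReal ((1-u) ^ (ν-1) * (t ^ (-(1/α)) * f (u * t ^ (-(1/α)))))
            * ENNReal.ofReal (t ^ (q-1)) := by
          exact lintegral_lintegral_swap ((hmh.ennreal_ofReal.mul (by fun_prop)).aemeasurable)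
      _ = ∫⁻ u in Ioo (0:ℝ) 1, ENNReal.ofReal (u ^ (α*q-1) * (1-u) ^ (ν-1))
            * ENNReal.ofReal (Real.Gamma q / Real.Gamma (α*q)) := by
          refine setLIntegral_congr_fun_ae measurableSet_Ioo (.of_forall fun u hu => ?_)
          obtain ⟨hu0, hu1⟩ := hu
          have h1u : (0:ℝ) < 1 - u := by linarith
          calc (∫⁻ t in Ioi (0:ℝ),
              ENNReal.ofReal ((1-u) ^ (ν-1) * (t ^ (-(1/α)) * f (u * t ^ (-(1/α)))))
              * ENNReal.ofReal (t ^ (q-1)))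
              = ∫⁻ t in Ioi (0:ℝ), ENNReal.ofReal ((1-u) ^ (ν-1))
                  * ENNReal.ofReal (t ^ (q - 1 - 1/α) * f (u * t ^ (-(1/α)))) := by
                refine setLIntegral_congr_fun_ae measurableSet_Ioi (.of_forall fun t ht => ?_)
                have ht' : (0:ℝ) < t := ht
                rw [← ENNReal.ofReal_mul (mul_nonneg (Real.rpow_nonneg h1u.le _)
                    (mul_nonneg (Real.rpow_nonneg ht'.le _) (hnn _))),
                  ← ENNReal.ofReal_mul (by positivity)]
                congr 1
                rw [show (1-u) ^ (ν-1) * (t ^ (-(1/α)) * f (u * t ^ (-(1/α)))) * t ^ (q-1)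
                    = (1-u) ^ (ν-1) * ((t ^ (-(1/α)) * t ^ (q-1)) * f (u * t ^ (-(1/α)))) by ring,
                  ← Real.rpow_add ht', show -(1/α) + (q-1) = q - 1 - 1/α by ring]
            _ = ENNReal.ofReal ((1-u) ^ (ν-1)) * (ENNReal.ofReal (u ^ (α*q-1))
                  * ENNReal.ofReal (Real.Gamma q / Real.Gamma (α*q))) := by
                rw [lintegral_const_mul' _ _ ofReal_ne_top,
                  inner_t hα0 hmeas hnn hint hlap hq hu0]
            _ = ENNReal.ofReal (u ^ (α*q-1) * (1-u) ^ (ν-1))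
                  * ENNReal.ofReal (Real.Gamma q / Real.Gamma (α*q)) := by
                rw [← mul_assoc, ← ENNReal.ofReal_mul (by positivity),
                  mul_comm ((1-u) ^ (ν-1))]
      _ = ENNReal.ofReal (Real.Gamma (α*q) * Real.Gamma ν / Real.Gamma (α*q + ν))
            * ENNReal.ofReal (Real.Gamma q / Real.Gamma (α*q)) := by
          rw [lintegral_mul_const' _ _ ofReal_ne_top, beta_lin (mul_pos hα0 hq) hν]
      _ = ENNReal.ofReal (Real.Gamma ν * Real.Gamma q / Real.Gamma (β + θ)) := by
          rw [← ENNReal.ofReal_mul (by positivity), hpν]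
          congr 1
          have h1 : Real.Gamma (α*q) ≠ 0 := (Real.Gamma_pos_of_pos (mul_pos hα0 hq)).ne'
          field_simp
  have hLinMeas : Measurable (fun t : ℝ => (∫⁻ u in Ioo (0:ℝ) 1,
      ENNReal.ofReal ((1-u) ^ (ν-1) * (t ^ (-(1/α)) * f (u * t ^ (-(1/α))))))) :=
    Measurable.lintegral_prod_right hmh.ennreal_ofReal
  have hae : ∀ᵐ t ∂(volume.restrict (Ioi (0:ℝ))),
      (∫⁻ u in Ioo (0:ℝ) 1,
        ENNReal.ofReal ((1-u) ^ (ν-1) * (t ^ (-(1/α)) * f (u * t ^ (-(1/α))))))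
        * ENNReal.ofReal (t ^ (q-1)) < ⊤ :=
    ae_lt_top (hLinMeas.mul (by fun_prop)) (by rw [hJ]; exact ofReal_ne_top)
  have hIval : (∫ t in Ioi (0:ℝ), (∫ u in Ioo (0:ℝ) 1,
        (1-u) ^ (ν-1) * (t ^ (-(1/α)) * f (u * t ^ (-(1/α))))) * t ^ (q-1))
      = (ENNReal.ofReal (Real.Gamma ν * Real.Gamma q / Real.Gamma (β + θ))).toReal := by
    rw [← hJ, integral_eq_lintegral_of_nonneg_ae]
    · congr 1
      refine lintegral_congr_ae ?_
      filter_upwards [hae, ae_restrict_mem measurableSet_Ioi] with t hlt ht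
      have ht' : (0:ℝ) < t := ht
      have hLt : (∫⁻ u in Ioo (0:ℝ) 1,
          ENNReal.ofReal ((1-u) ^ (ν-1) * (t ^ (-(1/α)) * f (u * t ^ (-(1/α)))))) ≠ ⊤ := by
        intro hcon
        rw [hcon, ENNReal.top_mul (by
          simp [ENNReal.ofReal_eq_zero, not_le, Real.rpow_pos_of_pos ht'])] at hlt
        exact (lt_irrefl _ hlt)
      have hInner : (∫ u in Ioo (0:ℝ) 1, (1-u) ^ (ν-1) * (t ^ (-(1/α)) * f (u * t ^ (-(1/α)))))
          = (∫⁻ u in Ioo (0:ℝ) 1,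
            ENNReal.ofReal ((1-u) ^ (ν-1) * (t ^ (-(1/α)) * f (u * t ^ (-(1/α)))))).toReal := by
        rw [integral_eq_lintegral_of_nonneg_ae]
        · filter_upwards [ae_restrict_mem measurableSet_Ioo] with u hu
          obtain ⟨hu0, hu1⟩ := hu
          have h1u : (0:ℝ) < 1 - u := by linarith
          have := hnn (u * t ^ (-(1/α)))
          positivity
        · exact (hmh.comp (measurable_const.prodMk measurable_id)).aestronglyMeasurable
      rw [hInner, ENNReal.ofReal_mul ENNReal.toReal_nonneg, ENNReal.ofReal_toReal hLt]
    · filter_upwards [ae_restrict_mem measurableSet_Ioi] with t ht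
      have ht' : (0:ℝ) < t := ht
      refine mul_nonneg (setIntegral_nonneg measurableSet_Ioo fun u hu => ?_)
        (Real.rpow_nonneg ht'.le _)
      obtain ⟨hu0, hu1⟩ := hu
      have h1u : (0:ℝ) < 1 - u := by linarith
      have := hnn (u * t ^ (-(1/α)))
      positivity
    · exact ((hmh.stronglyMeasurable.integral_prod_right).measurable.mul
        (by fun_prop : Measurable fun t : ℝ => t ^ (q-1))).aestronglyMeasurable
  rw [hIval, ENNReal.toReal_ofReal (by positivity)]
  field_simp
end

section
/- Let 0 < α < 1, let f_α be the one-sided stable density, let θ > −α, and let P_{α,θ} be the generalised Mittag-Leffler probability measure with density (Γ(1 + θ)/(α Γ(1 + θ/α))) f_α(t^{−1/α}) t^{(θ−1)/α−1} on (0, ∞). Then for every natural number n, ∫_0^∞ t^n dP_{α,θ}(t) = Γ(1 + θ) Γ(1 + n + θ/α) / (Γ(1 + θ/α) Γ(1 + α n + θ)). -/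
open MeasureTheory Real

open Set Filter Topology


lemma texp_le_one {t : ℝ} (ht : 0 ≤ t) : t * Real.exp (-t) ≤ 1 := by
  have h := Real.add_one_le_exp t
  have h2 : t * Real.exp (-t) ≤ Real.exp t * Real.exp (-t) :=
    mul_le_mul_of_nonneg_right (by linarith) (Real.exp_nonneg _)
  calc t * Real.exp (-t) ≤ Real.exp t * Real.exp (-t) := h2
    _ = 1 := by rw [← Real.exp_add]; simp

lemma aux_int_exp {f : ℝ → ℝ} (hmeas : Measurable f) (hnn : ∀ x, 0 ≤ f x)
    (hint : Integrable f) (hsupp : ∀ x < (0:ℝ), f x = 0) {s : ℝ} (hs : 0 < s) :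
    Integrable (fun x => Real.exp (-(s * x)) * f x) := by
  refine hint.mono' ?_ (Filter.Eventually.of_forall fun x => ?_)
  · exact ((measurable_const.mul measurable_id).neg.exp.mul hmeas).aestronglyMeasurable
  · rcases lt_or_ge x 0 with hx | hx
    · simp [hsupp x hx, hnn x]
    · rw [Real.norm_eq_abs, abs_of_nonneg (mul_nonneg (Real.exp_pos _).le (hnn x))]
      have h1 : Real.exp (-(s * x)) ≤ 1 := Real.exp_le_one_iff.mpr (by nlinarith)
      exact mul_le_of_le_one_left (hnn x) h1

lemma aux_int_xexp {f : ℝ → ℝ} (hmeas : Measurable f) (hnn : ∀ x, 0 ≤ f x)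
    (hint : Integrable f) (hsupp : ∀ x < (0:ℝ), f x = 0) {s : ℝ} (hs : 0 < s) :
    Integrable (fun x => x * (Real.exp (-(s * x)) * f x)) := by
  refine (hint.const_mul (1/s)).mono' ?_ (Filter.Eventually.of_forall fun x => ?_)
  · exact (measurable_id.mul ((measurable_const.mul measurable_id).neg.exp.mul hmeas)).aestronglyMeasurable
  · rcases lt_or_ge x 0 with hx | hx
    · simp [hsupp x hx]
    · rw [Real.norm_eq_abs, abs_of_nonneg (mul_nonneg hx (mul_nonneg (Real.exp_pos _).le (hnn x)))]
      have h1 : x * Real.exp (-(s * x)) ≤ 1/s := by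
        have h2 := texp_le_one (mul_nonneg hs.le hx)
        rw [le_div_iff₀ hs]
        nlinarith [Real.exp_pos (-(s*x))]
      calc x * (Real.exp (-(s * x)) * f x) = (x * Real.exp (-(s * x))) * f x := by ring
        _ ≤ (1/s) * f x := mul_le_mul_of_nonneg_right h1 (hnn x)

lemma fub (g L : ℝ → ℝ) (hg : Measurable g) (hgnn : ∀ x, 0 ≤ g x)
    (hsec : ∀ s, 0 < s → Integrable (fun x => Real.exp (-(s * x)) * g x))
    (hval : ∀ s, 0 < s → (∫ x in Set.Ioi (0:ℝ), Real.exp (-(s * x)) * g x) = L s)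
    {a : ℝ} (ha : 0 < a)
    (hL : IntegrableOn (fun s => s ^ (a - 1) * L s) (Set.Ioi 0)) :
    Real.Gamma a * ∫ x in Set.Ioi (0:ℝ), x ^ (-a) * g x
      = ∫ s in Set.Ioi (0:ℝ), s ^ (a - 1) * L s := by
  set μ := volume.restrict (Set.Ioi (0:ℝ)) with hμ
  set K : ℝ → ℝ → ℝ := fun s x => s ^ (a - 1) * (Real.exp (-(s * x)) * g x) with hK
  have hKm : Measurable (Function.uncurry K) := by
    simp only [hK, Function.uncurry]
    fun_prop
  have hKmeas : AEStronglyMeasurable (Function.uncurry K) (μ.prod μ) :=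
    hKm.aestronglyMeasurable
  have hKint : Integrable (Function.uncurry K) (μ.prod μ) := by
    rw [integrable_prod_iff hKmeas]
    constructor
    · filter_upwards [ae_restrict_mem measurableSet_Ioi] with s hs
      simp only [Function.uncurry_apply_pair, hK]
      exact Integrable.const_mul ((hsec s hs).restrict) _
    · simp only [Function.uncurry_apply_pair]
      have heq : (fun s => ∫ x, ‖K s x‖ ∂μ) =ᵐ[μ] fun s => s ^ (a - 1) * L s := by
        filter_upwards [ae_restrict_mem measurableSet_Ioi] with s hs
        have h1 : ∀ x, ‖K s x‖ = K s x := fun x => by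
          rw [Real.norm_eq_abs, abs_of_nonneg]
          exact mul_nonneg (Real.rpow_nonneg (le_of_lt hs) _)
            (mul_nonneg (Real.exp_pos _).le (hgnn x))
        simp only [h1]; simp only [hK]
        rw [integral_const_mul, hval s hs]
      exact hL.congr heq.symm
  have hswap := integral_integral_swap hKint
  have hleft : (∫ s, ∫ x, K s x ∂μ ∂μ) = ∫ s in Set.Ioi (0:ℝ), s ^ (a - 1) * L s := by
    apply integral_congr_ae
    filter_upwards [ae_restrict_mem measurableSet_Ioi] with s hs
    simp only [hK]
    rw [integral_const_mul, hval s hs]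
  have hright : (∫ x, ∫ s, K s x ∂μ ∂μ)
      = Real.Gamma a * ∫ x in Set.Ioi (0:ℝ), x ^ (-a) * g x := by
    rw [← integral_const_mul]
    apply integral_congr_ae
    filter_upwards [ae_restrict_mem measurableSet_Ioi] with x hx
    have hx0 : (0:ℝ) < x := hx
    have h2 : (∫ s, K s x ∂μ) = (∫ s in Set.Ioi (0:ℝ), s ^ (a - 1) * Real.exp (-(x * s))) * g x := by
      rw [← integral_mul_const]
      apply integral_congr_ae
      filter_upwards [] with s
      simp only [hK]
      rw [mul_comm x s]
      ring
    rw [h2, integral_rpow_mul_exp_neg_mul_Ioi ha hx0]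
    rw [one_div, Real.inv_rpow hx0.le, ← Real.rpow_neg hx0.le]
    ring
  rw [← hleft, hswap, hright]

lemma int_gamma_rpow {α : ℝ} (hα0 : 0 < α) {c : ℝ} (hc : -1 < c) :
    IntegrableOn (fun s : ℝ => s ^ c * Real.exp (-(s ^ α))) (Set.Ioi 0) := by
  have hpos : 0 < (c + 1) / α := div_pos (by linarith) hα0
  have hG : IntegrableOn (fun u : ℝ => u ^ ((c + 1) / α - 1) * Real.exp (-u)) (Set.Ioi 0) := by
    have h := Real.GammaIntegral_convergent hpos
    exact h.congr_fun (fun x hx => by ring) measurableSet_Ioi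
  have h2 := (integrableOn_Ioi_comp_rpow_iff' (fun u => u ^ ((c + 1) / α - 1) * Real.exp (-u))
    hα0.ne').mpr hG
  apply h2.congr_fun ?_ measurableSet_Ioi
  intro x hx
  have hx0 : (0:ℝ) < x := hx
  simp only [smul_eq_mul]
  rw [← Real.rpow_mul hx0.le]
  rw [show α * ((c + 1) / α - 1) = c + 1 - α by field_simp]
  rw [← mul_assoc, ← Real.rpow_add hx0]
  ring_nf

lemma val_gamma_rpow {α : ℝ} (hα0 : 0 < α) {c : ℝ} (hc : -1 < c) :
    ∫ s in Set.Ioi (0:ℝ), s ^ c * Real.exp (-(s ^ α)) = (1 / α) * Real.Gamma ((c + 1) / α) :=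
  integral_rpow_mul_exp_neg_rpow hα0 hc

lemma int_f_one {α : ℝ} (hα0 : 0 < α) {f : ℝ → ℝ} (hmeas : Measurable f) (hnn : ∀ x, 0 ≤ f x)
    (hint : Integrable f) (hsupp : ∀ x < (0:ℝ), f x = 0)
    (hlap : ∀ s > (0:ℝ),
      (∫ x in Set.Ioi (0:ℝ), Real.exp (-(s * x)) * f x) = Real.exp (-(s ^ α))) :
    ∫ x in Set.Ioi (0:ℝ), f x = 1 := by
  have hzero : Tendsto (fun n : ℕ => 1 / ((n : ℝ) + 1)) atTop (𝓝 0) :=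
    tendsto_one_div_add_atTop_nhds_zero_nat
  have h1 : Tendsto (fun n : ℕ => ∫ x in Set.Ioi (0:ℝ), Real.exp (-((1 / ((n:ℝ) + 1)) * x)) * f x)
      atTop (𝓝 (∫ x in Set.Ioi (0:ℝ), f x)) := by
    apply tendsto_integral_of_dominated_convergence f
    · intro n
      exact (((measurable_const.mul measurable_id).neg.exp.mul hmeas)).aestronglyMeasurable
    · exact hint.restrict
    · intro n
      refine Filter.Eventually.of_forall fun x => ?_
      rcases lt_or_ge x 0 with hx | hx
      · simp [hsupp x hx, hnn x]
      · rw [Real.norm_eq_abs, abs_of_nonneg (mul_nonneg (Real.exp_pos _).le (hnn x))]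
        exact mul_le_of_le_one_left (hnn x) (Real.exp_le_one_iff.mpr (by positivity |> neg_nonpos_of_nonneg))
    · refine Filter.Eventually.of_forall fun x => ?_
      have hc : Continuous fun s : ℝ => Real.exp (-(s * x)) * f x := by fun_prop
      have := (hc.tendsto 0).comp hzero
      simpa [Function.comp_def] using this
  have h2 : Tendsto (fun n : ℕ => ∫ x in Set.Ioi (0:ℝ), Real.exp (-((1 / ((n:ℝ) + 1)) * x)) * f x)
      atTop (𝓝 1) := by
    have heq : ∀ n : ℕ, (∫ x in Set.Ioi (0:ℝ), Real.exp (-((1 / ((n:ℝ) + 1)) * x)) * f x)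
        = Real.exp (-((1 / ((n:ℝ) + 1)) ^ α)) := fun n => hlap _ (by positivity)
    simp_rw [heq]
    have h0 : Tendsto (fun n : ℕ => (1 / ((n:ℝ) + 1)) ^ α) atTop (𝓝 0) := by
      have hc : ContinuousAt (fun y : ℝ => y ^ α) 0 :=
        Real.continuousAt_rpow_const 0 α (Or.inr hα0.le)
      have := hc.tendsto.comp hzero
      simpa [Function.comp_def, Real.zero_rpow hα0.ne'] using this
    have := (Real.continuous_exp.tendsto (-0)).comp h0.neg
    simpa [Function.comp_def] using this
  exact tendsto_nhds_unique h1 h2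

lemma lap_deriv {α : ℝ} (hα0 : 0 < α) {f : ℝ → ℝ} (hmeas : Measurable f) (hnn : ∀ x, 0 ≤ f x)
    (hint : Integrable f) (hsupp : ∀ x < (0:ℝ), f x = 0)
    (hlap : ∀ s > (0:ℝ),
      (∫ x in Set.Ioi (0:ℝ), Real.exp (-(s * x)) * f x) = Real.exp (-(s ^ α)))
    {s : ℝ} (hs : 0 < s) :
    ∫ x in Set.Ioi (0:ℝ), x * (Real.exp (-(s * x)) * f x)
      = α * s ^ (α - 1) * Real.exp (-(s ^ α)) := by
  set μ := volume.restrict (Set.Ioi (0:ℝ)) with hμ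
  set F : ℝ → ℝ → ℝ := fun t x => Real.exp (-(t * x)) * f x with hF
  set F' : ℝ → ℝ → ℝ := fun t x => -(x * (Real.exp (-(t * x)) * f x)) with hF'
  have hball : ∀ t ∈ Metric.ball s (s / 2), s / 2 < t := by
    intro t ht
    rw [Metric.mem_ball, Real.dist_eq, abs_lt] at ht
    linarith [ht.1]
  have key := hasDerivAt_integral_of_dominated_loc_of_deriv_le (μ := μ) (F := F) (F' := F')
    (x₀ := s) (s := Metric.ball s (s / 2)) (bound := fun x => (2 / s) * f x) (Metric.ball_mem_nhds s (half_pos hs))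
    (Filter.Eventually.of_forall fun t =>
      (((measurable_const.mul measurable_id).neg.exp.mul hmeas)).aestronglyMeasurable)
    ((aux_int_exp hmeas hnn hint hsupp hs).restrict)
    ((measurable_id.mul ((measurable_const.mul measurable_id).neg.exp.mul hmeas)).neg).aestronglyMeasurable
    ?_ ((hint.const_mul (2 / s)).restrict) ?_
  · -- use key
    have hd2 : HasDerivAt (fun t : ℝ => Real.exp (-(t ^ α)))
        (Real.exp (-(s ^ α)) * -(α * s ^ (α - 1))) s :=
      ((Real.hasDerivAt_rpow_const (p := α) (Or.inl hs.ne')).neg).exp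
    have heq : (fun t : ℝ => ∫ x, F t x ∂μ) =ᶠ[𝓝 s] (fun t : ℝ => Real.exp (-(t ^ α))) := by
      filter_upwards [isOpen_Ioi.mem_nhds (show s ∈ Set.Ioi (0:ℝ) from hs)] with t ht
      exact hlap t ht
    have hd1 : HasDerivAt (fun t : ℝ => Real.exp (-(t ^ α))) (∫ x, F' s x ∂μ) s :=
      key.2.congr_of_eventuallyEq heq.symm
    have huniq := hd1.unique hd2
    have : (∫ x, F' s x ∂μ) = -∫ x in Set.Ioi (0:ℝ), x * (Real.exp (-(s * x)) * f x) := by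
      rw [hμ, ← integral_neg]
    rw [this] at huniq
    linarith [huniq]
  · -- bound
    filter_upwards [ae_restrict_mem measurableSet_Ioi] with x hx
    intro t ht
    have hx0 : (0:ℝ) < x := hx
    have hts := hball t ht
    simp only [hF', norm_neg, Real.norm_eq_abs]
    rw [abs_of_nonneg (mul_nonneg hx0.le (mul_nonneg (Real.exp_pos _).le (hnn x)))]
    have h1 : Real.exp (-(t * x)) ≤ Real.exp (-((s / 2) * x)) :=
      Real.exp_le_exp.mpr (by nlinarith)
    have h2 : x * Real.exp (-((s / 2) * x)) ≤ 2 / s := by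
      have h3 := texp_le_one (mul_nonneg (half_pos hs).le hx0.le)
      rw [le_div_iff₀ hs]
      nlinarith [Real.exp_pos (-((s / 2) * x))]
    calc x * (Real.exp (-(t * x)) * f x) ≤ x * (Real.exp (-((s / 2) * x)) * f x) :=
          mul_le_mul_of_nonneg_left (mul_le_mul_of_nonneg_right h1 (hnn x)) hx0.le
      _ = (x * Real.exp (-((s / 2) * x))) * f x := by ring
      _ ≤ (2 / s) * f x := mul_le_mul_of_nonneg_right h2 (hnn x)
  · -- differentiability
    refine Filter.Eventually.of_forall fun x => ?_
    intro t ht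
    have hd : HasDerivAt (fun t : ℝ => Real.exp (-(t * x))) (Real.exp (-(t * x)) * -x) t :=
      ((hasDerivAt_mul_const x).neg).exp
    have := hd.mul_const (f x)
    convert this using 1
    · rfl
    simp only [hF']
    ring

lemma moment {α : ℝ} (hα0 : 0 < α) (hα1 : α < 1) {f : ℝ → ℝ}
    (hmeas : Measurable f) (hnn : ∀ x, 0 ≤ f x)
    (hint : Integrable f) (hsupp : ∀ x < (0:ℝ), f x = 0)
    (hlap : ∀ s > (0:ℝ),
      (∫ x in Set.Ioi (0:ℝ), Real.exp (-(s * x)) * f x) = Real.exp (-(s ^ α)))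
    {p : ℝ} (hp : -α < p) :
    ∫ x in Set.Ioi (0:ℝ), x ^ (-p) * f x
      = Real.Gamma (1 + p / α) / Real.Gamma (1 + p) := by
  rcases lt_trichotomy p 0 with hneg | rfl | hpos
  · -- negative p
    have ha : 0 < 1 + p := by linarith
    have hgnn : ∀ x : ℝ, 0 ≤ x * f x := by
      intro x
      rcases le_or_gt 0 x with hx | hx
      · exact mul_nonneg hx (hnn x)
      · simp [hsupp x hx]
    have key := fub (fun x => x * f x) (fun s => α * s ^ (α - 1) * Real.exp (-(s ^ α)))
      (measurable_id.mul hmeas) hgnn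
      (fun s hs => ((aux_int_xexp hmeas hnn hint hsupp hs).congr
        (Filter.Eventually.of_forall fun x => by ring)))
      (fun s hs => by
        show (∫ x in Set.Ioi (0:ℝ), Real.exp (-(s * x)) * (x * f x))
          = α * s ^ (α - 1) * Real.exp (-(s ^ α))
        rw [← lap_deriv hα0 hmeas hnn hint hsupp hlap hs]
        exact setIntegral_congr_fun measurableSet_Ioi fun x hx => by ring)
      ha
      (by
        have h1 := (int_gamma_rpow hα0 (c := α + p - 1) (by linarith)).const_mul α
        apply MeasureTheory.IntegrableOn.congr_fun h1 ?_ measurableSet_Ioi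
        intro x hx
        dsimp only
        have hx0 : (0:ℝ) < x := hx
        have h2 : x ^ (α + p - 1) = x ^ (1 + p - 1) * x ^ (α - 1) := by
          rw [← Real.rpow_add hx0]; ring_nf
        rw [h2]; ring)
    have hlhs : (∫ x in Set.Ioi (0:ℝ), x ^ (-(1 + p)) * (x * f x))
        = ∫ x in Set.Ioi (0:ℝ), x ^ (-p) * f x := by
      apply setIntegral_congr_fun measurableSet_Ioi
      intro x hx
      have hx0 : (0:ℝ) < x := hx
      have h3 : x ^ (-(1 + p)) * x = x ^ (-p) := by
        rw [← Real.rpow_add_one hx0.ne' (-(1 + p))]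
        norm_num
      calc x ^ (-(1 + p)) * (x * f x) = (x ^ (-(1 + p)) * x) * f x := by ring
        _ = x ^ (-p) * f x := by rw [h3]
    have hrhs : (∫ s in Set.Ioi (0:ℝ), s ^ (1 + p - 1) * (α * s ^ (α - 1) * Real.exp (-(s ^ α))))
        = Real.Gamma (1 + p / α) := by
      have h4 : (∫ s in Set.Ioi (0:ℝ), s ^ (1 + p - 1) * (α * s ^ (α - 1) * Real.exp (-(s ^ α))))
          = α * ∫ s in Set.Ioi (0:ℝ), s ^ (α + p - 1) * Real.exp (-(s ^ α)) := by
        rw [← integral_const_mul]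
        apply setIntegral_congr_fun measurableSet_Ioi
        intro x hx
        dsimp only
        have hx0 : (0:ℝ) < x := hx
        have h2 : x ^ (α + p - 1) = x ^ (1 + p - 1) * x ^ (α - 1) := by
          rw [← Real.rpow_add hx0]; ring_nf
        rw [h2]; ring
      rw [h4, val_gamma_rpow hα0 (by linarith)]
      rw [show (α + p - 1 + 1) / α = 1 + p / α by field_simp; ring]
      rw [← mul_assoc, mul_one_div, div_self hα0.ne', one_mul]
    rw [hlhs, hrhs] at key
    have hΓ : 0 < Real.Gamma (1 + p) := Real.Gamma_pos_of_pos ha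
    field_simp at key ⊢
    linarith [key]
  · -- p = 0
    simp only [neg_zero, Real.rpow_zero, one_mul, zero_div, add_zero]
    rw [int_f_one hα0 hmeas hnn hint hsupp hlap, Real.Gamma_one]
    norm_num
  · -- positive p
    have key := fub f (fun s => Real.exp (-(s ^ α))) hmeas hnn
      (fun s hs => aux_int_exp hmeas hnn hint hsupp hs)
      (fun s hs => hlap s hs) hpos
      (int_gamma_rpow hα0 (c := p - 1) (by linarith))
    rw [val_gamma_rpow hα0 (by linarith), show (p - 1 + 1) / α = p / α by ring_nf] at key
    have hΓp : 0 < Real.Gamma p := Real.Gamma_pos_of_pos hpos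
    have hΓpa : 0 < Real.Gamma (p / α) := Real.Gamma_pos_of_pos (div_pos hpos hα0)
    rw [show (1:ℝ) + p / α = p / α + 1 from add_comm _ _,
      Real.Gamma_add_one (div_pos hpos hα0).ne',
      show (1:ℝ) + p = p + 1 from add_comm _ _,
      Real.Gamma_add_one hpos.ne']
    rw [eq_div_iff (by positivity)]
    field_simp at key ⊢
    nlinarith [key]
theorem stmt_16 (α : ℝ) (hα0 : 0 < α) (hα1 : α < 1)
    (f : ℝ → ℝ) (hmeas : Measurable f) (hnn : ∀ x, 0 ≤ f x)
    (hint : Integrable f) (hsupp : ∀ x < (0:ℝ), f x = 0)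
    (hlap : ∀ s > (0:ℝ),
      (∫ x in Set.Ioi (0:ℝ), Real.exp (-(s * x)) * f x) = Real.exp (-(s ^ α)))
    (θ : ℝ) (hθ : -α < θ) :
    ∀ n : ℕ,
      (∫ t in Set.Ioi (0:ℝ),
          (t : ℝ) ^ n * (Real.Gamma (1 + θ) / (α * Real.Gamma (1 + θ / α)) *
            (f (t ^ (-(1/α))) * t ^ ((θ - 1) / α - 1))))
        = Real.Gamma (1 + θ) * Real.Gamma (1 + n + θ / α) /
            (Real.Gamma (1 + θ / α) * Real.Gamma (1 + α * n + θ)) := by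
  intro n
  set C := Real.Gamma (1 + θ) / (α * Real.Gamma (1 + θ / α)) with hC
  have hsub := integral_comp_rpow_Ioi
    (fun t => t ^ n * (C * (f (t ^ (-(1/α))) * t ^ ((θ - 1) / α - 1)))) (p := -α)
    (by simpa using hα0.ne')
  rw [← hsub]
  have hmom := moment hα0 hα1 hmeas hnn hint hsupp hlap
    (p := α * n + θ) (by nlinarith [mul_nonneg hα0.le (Nat.cast_nonneg n)])
  have heq : ∀ x ∈ Set.Ioi (0:ℝ),
      (|(-α)| * x ^ (-α - 1)) • ((fun t : ℝ => t ^ n * (C * (f (t ^ (-(1/α))) * t ^ ((θ - 1) / α - 1)))) (x ^ (-α)))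
        = (α * C) * (x ^ (-(α * n + θ)) * f x) := by
    intro x hx
    have hx0 : (0:ℝ) < x := hx
    simp only [smul_eq_mul, abs_neg, abs_of_pos hα0]
    rw [← Real.rpow_natCast (x ^ (-α)) n, ← Real.rpow_mul hx0.le, ← Real.rpow_mul hx0.le,
      ← Real.rpow_mul hx0.le]
    rw [show -α * -(1/α) = 1 by field_simp, Real.rpow_one]
    have e2 : x ^ (-α - 1) * x ^ (-α * (n:ℝ)) * x ^ (-α * ((θ - 1) / α - 1))
        = x ^ (-(α * n + θ)) := by
      rw [← Real.rpow_add hx0, ← Real.rpow_add hx0]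
      congr 1
      field_simp
      ring
    calc α * x ^ (-α - 1) * (x ^ (-α * (n:ℝ)) * (C * (f x * x ^ (-α * ((θ - 1) / α - 1)))))
        = (α * C) * ((x ^ (-α - 1) * x ^ (-α * (n:ℝ)) * x ^ (-α * ((θ - 1) / α - 1))) * f x) := by
          ring
      _ = (α * C) * (x ^ (-(α * n + θ)) * f x) := by rw [e2]
  rw [setIntegral_congr_fun measurableSet_Ioi heq, integral_const_mul, hmom]
  have hθα : -1 < θ / α := by
    rw [neg_lt, ← neg_div]
    exact (div_lt_one hα0).mpr (by linarith)
  have hΓ1 : 0 < Real.Gamma (1 + θ / α) := Real.Gamma_pos_of_pos (by linarith)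
  have hΓ2 : 0 < Real.Gamma (1 + α * n + θ) :=
    Real.Gamma_pos_of_pos (by nlinarith [mul_nonneg hα0.le (Nat.cast_nonneg n)])
  rw [show (1:ℝ) + (α * n + θ) / α = 1 + n + θ / α by field_simp; ring]
  have hαC : α * C = Real.Gamma (1 + θ) / Real.Gamma (1 + θ / α) := by
    rw [hC]
    field_simp
  rw [hαC, div_mul_div_comm, ← add_assoc]
end
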